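/- arXiv:1010.0947 — 7 statements merged into one kernel-verified Lean document; each statement's English description precedes it below -/
import Mathlib

section
/- Let G be the disjoint union of n complete graphs G_1, …, G_n, each with at least 2 vertices, let r ≤ n, and let 2 ≤ k ≤ min_i |G_i|. If A_1, …, A_k are cross-intersecting families of independent sets of size r in G, then the sum of their cardinalities is at most the total number of independent sets of size r in G. -/
/-- A finset of vertices is independent in `G`. -/
def IndepFinset {V : Type*} (G : SimpleGraph V) (A : Finset V) : Prop :=
  ∀ u ∈ A, ∀ v ∈ A, ¬ G.Adj u v

/-- The disjoint union of `n` complete graphs, the `i`-th one on `m i` vertices: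
two distinct vertices are adjacent iff they lie in the same component. -/
def cliqueUnion (n : ℕ) (m : Fin n → ℕ) : SimpleGraph (Σ i : Fin n, Fin (m i)) :=
  SimpleGraph.fromRel (fun a b => a.1 = b.1)

theorem stmt7 (n : ℕ) (m : Fin n → ℕ) (hm : ∀ i, 2 ≤ m i) (r k : ℕ)
    (hr : r ≤ n) (hk2 : 2 ≤ k) (hk : ∀ i, k ≤ m i)
    (𝒜 : Fin k → Finset (Finset (Σ i : Fin n, Fin (m i))))
    (hind : ∀ i, ∀ A ∈ 𝒜 i, IndepFinset (cliqueUnion n m) A ∧ A.card = r)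
    (hcross : ∀ i j, i ≠ j → ∀ A ∈ 𝒜 i, ∀ B ∈ 𝒜 j, (A ∩ B).Nonempty) :
    ∑ i, (𝒜 i).card ≤
      Set.ncard {A : Finset (Σ i : Fin n, Fin (m i)) |
        IndepFinset (cliqueUnion n m) A ∧ A.card = r} := by
  classical
  haveI : ∀ i, NeZero (m i) := fun i => ⟨by have := hm i; omega⟩
  letI : ∀ i, NatCast (Fin (m i)) := fun i => Fin.NatCast.instNatCast (m i)
  set V := (Σ i : Fin n, Fin (m i)) with hV
  -- the shift map
  let f : ℕ → V → V := fun t v => ⟨v.1, v.2 + (t : Fin (m v.1))⟩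
  have hfinj : ∀ t, Function.Injective (f t) := by
    intro t v w h
    obtain ⟨i, x⟩ := v; obtain ⟨j, y⟩ := w
    have h1 : i = j := congrArg Sigma.fst h
    subst h1
    have h2 : x + (t : Fin (m i)) = y + (t : Fin (m i)) := by
      exact eq_of_heq (Sigma.mk.inj_iff.mp h).2
    rw [add_right_cancel h2]
  have hf1 : ∀ t (v : V), (f t v).1 = v.1 := fun t v => rfl
  -- adjacency characterization
  have hadj : ∀ u v : V, (cliqueUnion n m).Adj u v ↔ u ≠ v ∧ u.1 = v.1 := by
    intro u v
    constructor
    · rintro ⟨hne, h | h⟩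
      exacts [⟨hne, h⟩, ⟨hne, h.symm⟩]
    · rintro ⟨hne, h⟩
      exact ⟨hne, Or.inl h⟩
  -- independence gives one vertex per clique
  have hone : ∀ (A : Finset V), IndepFinset (cliqueUnion n m) A →
      ∀ u ∈ A, ∀ v ∈ A, u.1 = v.1 → u = v := by
    intro A hA u hu v hv h1
    by_contra hne
    exact hA u hu v hv ((hadj u v).2 ⟨hne, h1⟩)
  -- image preserves independence
  have himg : ∀ t (A : Finset V), IndepFinset (cliqueUnion n m) A →
      IndepFinset (cliqueUnion n m) (A.image (f t)) := by
    intro t A hA u' hu' v' hv' hadj'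
    obtain ⟨u, hu, rfl⟩ := Finset.mem_image.1 hu'
    obtain ⟨v, hv, rfl⟩ := Finset.mem_image.1 hv'
    obtain ⟨hne, h1⟩ := (hadj _ _).1 hadj'
    exact hA u hu v hv ((hadj u v).2 ⟨fun h => hne (by rw [h]), h1⟩)
  -- finiteness of the target set
  set S := {A : Finset V | IndepFinset (cliqueUnion n m) A ∧ A.card = r} with hS
  have hSfin : S.Finite := Set.toFinite _
  rw [Set.ncard_eq_toFinset_card _ hSfin, ← Finset.card_sigma]
  apply Finset.card_le_card_of_injOn (fun p => p.2.image (f p.1.val))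
  · rintro ⟨i, A⟩ hp
    simp only [Finset.mem_coe, Finset.mem_sigma, Finset.mem_univ, true_and] at hp
    obtain ⟨hAind, hAcard⟩ := hind i A hp
    rw [Finset.mem_coe, Set.Finite.mem_toFinset]
    exact ⟨himg _ _ hAind, by rw [Finset.card_image_of_injective _ (hfinj _), hAcard]⟩
  · rintro ⟨i, A⟩ hp ⟨j, B⟩ hq heq
    simp only [Finset.mem_coe, Finset.mem_sigma, Finset.mem_univ, true_and] at hp hq
    by_cases hij : i = j
    · subst hij
      have : A = B := Finset.image_injective (hfinj i.val) heq
      simp [this]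
    · exfalso
      obtain ⟨v, hv⟩ := hcross i j hij A hp B hq
      rw [Finset.mem_inter] at hv
      have heq' : A.image (f i.val) = B.image (f j.val) := heq
      have hvB : f j.val v ∈ B.image (f j.val) := Finset.mem_image_of_mem _ hv.2
      rw [← heq'] at hvB
      obtain ⟨u, hu, huv⟩ := Finset.mem_image.1 hvB
      -- u ∈ A, f i u = f j v, so u.1 = v.1
      have h1 : u.1 = v.1 := by
        have := congrArg Sigma.fst huv
        simpa using this
      have huv' : u = v := hone A (hind i A hp).1 u hu v hv.1 h1
      subst huv'
      -- f i u = f j u implies (i : Fin (m u.1)) = j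
      have h2 : u.2 + (i.val : Fin (m u.1)) = u.2 + (j.val : Fin (m u.1)) := by
        obtain ⟨c, x⟩ := u
        exact eq_of_heq (Sigma.mk.inj_iff.mp huv).2
      have h3 : (i.val : Fin (m u.1)) = (j.val : Fin (m u.1)) := add_left_cancel h2
      have h4 : i.val % m u.1 = j.val % m u.1 := by
        have := congrArg Fin.val h3
        exact this
      have hik : i.val < m u.1 := lt_of_lt_of_le i.isLt (hk u.1)
      have hjk : j.val < m u.1 := lt_of_lt_of_le j.isLt (hk u.1)
      rw [Nat.mod_eq_of_lt hik, Nat.mod_eq_of_lt hjk] at h4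
      exact hij (Fin.ext h4)
end

section
/- Let M_n be a perfect matching on 2n vertices (n disjoint edges), and let r ≤ n. If (A, B) is a cross-intersecting pair of families of independent sets of size r in M_n, then |A| + |B| ≤ 2^r · C(n, r). Moreover, if r < n, equality holds if and only if one of the two families is all of J^r(M_n) and the other is empty. -/
/-- The perfect matching `M_n` on `2n` vertices: `n` pairwise disjoint edges. -/
def matchingGraph (n : ℕ) : SimpleGraph (Fin n × Fin 2) :=
  SimpleGraph.fromRel (fun a b => a.1 = b.1)

open Finset

namespace Stmt8

lemma adj_iff {n : ℕ} {a b : Fin n × Fin 2} :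
    (matchingGraph n).Adj a b ↔ a ≠ b ∧ a.1 = b.1 := by
  simp only [matchingGraph, SimpleGraph.fromRel_adj]
  constructor
  · rintro ⟨h1, h2⟩; exact ⟨h1, h2.elim id Eq.symm⟩
  · rintro ⟨h1, h2⟩; exact ⟨h1, Or.inl h2⟩

lemma indep_iff {n : ℕ} {A : Finset (Fin n × Fin 2)} :
    IndepFinset (matchingGraph n) A ↔ ∀ u ∈ A, ∀ v ∈ A, u.1 = v.1 → u = v := by
  unfold IndepFinset
  constructor
  · intro h u hu v hv h1
    by_contra hne
    exact h u hu v hv (adj_iff.mpr ⟨hne, h1⟩)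
  · intro h u hu v hv hadj
    obtain ⟨hne, h1⟩ := adj_iff.mp hadj
    exact hne (h u hu v hv h1)



def flip' {n : ℕ} (p : Fin n × Fin 2) : Fin n × Fin 2 := (p.1, p.2 + 1)

lemma flip_invol {n : ℕ} : Function.Involutive (flip' (n := n)) := by
  intro p
  have h : ∀ j : Fin 2, j + 1 + 1 = j := by decide
  exact Prod.ext rfl (h p.2)

lemma flip_ne {n : ℕ} (p : Fin n × Fin 2) : flip' p ≠ p := by
  have h : ∀ j : Fin 2, j + 1 ≠ j := by decide
  intro hc
  exact h p.2 (congrArg Prod.snd hc)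

noncomputable def Jf (n r : ℕ) : Finset (Finset (Fin n × Fin 2)) := by
  classical
  exact univ.filter (fun A => IndepFinset (matchingGraph n) A ∧ A.card = r)

lemma mem_Jf {n r : ℕ} {A : Finset (Fin n × Fin 2)} :
    A ∈ Jf n r ↔ IndepFinset (matchingGraph n) A ∧ A.card = r := by
  simp [Jf]

/-- flip of a vertex of an independent set is not in the set -/
lemma flip_notMem {n : ℕ} {A : Finset (Fin n × Fin 2)}
    (hA : IndepFinset (matchingGraph n) A) {p : Fin n × Fin 2} (hp : p ∈ A) :
    flip' p ∉ A := by
  intro hc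
  exact flip_ne p (indep_iff.mp hA _ hc _ hp rfl)

lemma cflip_mem_Jf {n r : ℕ} {A : Finset (Fin n × Fin 2)} (hA : A ∈ Jf n r) :
    A.image flip' ∈ Jf n r := by
  obtain ⟨h1, h2⟩ := mem_Jf.mp hA
  refine mem_Jf.mpr ⟨indep_iff.mpr ?_, ?_⟩
  · intro u hu v hv huv
    obtain ⟨u', hu', rfl⟩ := mem_image.mp hu
    obtain ⟨v', hv', rfl⟩ := mem_image.mp hv
    have : u' = v' := indep_iff.mp h1 _ hu' _ hv' huv
    rw [this]
  · rw [card_image_of_injective _ flip_invol.injective, h2]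

lemma cflip_cflip {n : ℕ} (A : Finset (Fin n × Fin 2)) :
    (A.image flip').image flip' = A := by
  rw [image_image]
  simp [flip_invol.comp_self]

lemma disjoint_cflip {n : ℕ} {A : Finset (Fin n × Fin 2)}
    (hA : IndepFinset (matchingGraph n) A) : Disjoint A (A.image flip') := by
  rw [disjoint_left]
  intro p hp hp'
  obtain ⟨q, hq, hqp⟩ := mem_image.mp hp'
  exact flip_notMem hA hq (hqp ▸ hp)


lemma card_Jf (n r : ℕ) : (Jf n r).card = 2 ^ r * n.choose r := by
  classical
  have key : (Jf n r).card =
      (((univ : Finset (Fin n)).powersetCard r).sigma (fun S => S.powerset)).card := by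
    refine card_bij' (i := fun A _ => ⟨A.image Prod.fst,
        (A.filter (fun p => p.2 = 1)).image Prod.fst⟩)
      (j := fun x _ => x.1.image (fun i => (i, if i ∈ x.2 then (1 : Fin 2) else 0)))
      ?_ ?_ ?_ ?_
    · rintro A hA
      obtain ⟨h1, h2⟩ := mem_Jf.mp hA
      rw [mem_sigma]
      constructor
      · rw [mem_powersetCard]
        refine ⟨subset_univ _, ?_⟩
        rw [card_image_of_injOn, h2]
        intro u hu v hv huv
        exact indep_iff.mp h1 _ hu _ hv huv
      · rw [mem_powerset]
        exact image_subset_image (filter_subset _ _)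
    · rintro ⟨S, T⟩ hx
      rw [mem_sigma, mem_powersetCard, mem_powerset] at hx
      obtain ⟨⟨-, hScard⟩, hTS⟩ := hx
      have hinj : Set.InjOn (fun i => ((i, if i ∈ T then (1 : Fin 2) else 0) : Fin n × Fin 2)) S := by
        intro u _ v _ huv
        exact congrArg Prod.fst huv
      refine mem_Jf.mpr ⟨indep_iff.mpr ?_, ?_⟩
      · intro u hu v hv huv
        obtain ⟨u', hu', rfl⟩ := mem_image.mp hu
        obtain ⟨v', hv', rfl⟩ := mem_image.mp hv
        have h : u' = v' := by simpa using huv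
        subst h
        rfl
      · rw [card_image_of_injOn hinj, hScard]
    · -- left inverse
      intro A hA
      obtain ⟨h1, h2⟩ := mem_Jf.mp hA
      have hT : ∀ i : Fin n, i ∈ (A.filter (fun p => p.2 = 1)).image Prod.fst ↔ (i, 1) ∈ A := by
        intro i
        constructor
        · intro hi
          obtain ⟨⟨c, d⟩, hcd, hc⟩ := mem_image.mp hi
          rw [mem_filter] at hcd
          obtain ⟨hcdA, hd⟩ := hcd
          subst hc; subst hd
          exact hcdA
        · intro hi
          exact mem_image.mpr ⟨(i, 1), mem_filter.mpr ⟨hi, rfl⟩, rfl⟩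
      have htwo : ∀ j : Fin 2, j = 0 ∨ j = 1 := by decide
      ext ⟨i, j⟩
      constructor
      · intro hp
        obtain ⟨i', hi', heq⟩ := mem_image.mp hp
        obtain ⟨⟨a, b⟩, hab, ha⟩ := mem_image.mp hi'
        simp only at ha
        subst ha
        have hia : i = a := (congrArg Prod.fst heq).symm
        subst hia
        by_cases hmemT : i ∈ (A.filter (fun p => p.2 = 1)).image Prod.fst
        · rw [if_pos hmemT] at heq
          rw [← heq]
          exact (hT i).mp hmemT
        · rw [if_neg hmemT] at heq
          have hb0 : b = 0 := by
            rcases htwo b with h | h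
            · exact h
            · exact absurd ((hT i).mpr (h ▸ hab)) hmemT
          rw [← heq, ← hb0]
          exact hab
      · intro hp
        refine mem_image.mpr ⟨i, mem_image.mpr ⟨(i, j), hp, rfl⟩, ?_⟩
        rcases htwo j with h | h
        · subst h
          rw [if_neg]
          intro hmemT
          have h1A : (i, 1) ∈ A := (hT i).mp hmemT
          have := indep_iff.mp h1 _ hp _ h1A rfl
          simp at this
        · subst h
          rw [if_pos ((hT i).mpr hp)]
    · -- right inverse
      rintro ⟨S, T⟩ hx
      rw [mem_sigma, mem_powersetCard, mem_powerset] at hx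
      obtain ⟨⟨-, hScard⟩, hTS⟩ := hx
      have h1 : ((S.image (fun i => ((i, if i ∈ T then (1 : Fin 2) else 0) : Fin n × Fin 2))).image
          Prod.fst) = S := by
        ext i; simp
      refine Sigma.ext h1 (heq_of_eq ?_)
      ext i
      constructor
      · intro hi
        dsimp only at hi
        obtain ⟨⟨a, b⟩, hab, ha⟩ := mem_image.mp hi
        rw [mem_filter] at hab
        obtain ⟨hmem, hb⟩ := hab
        obtain ⟨i', hi', heq⟩ := mem_image.mp hmem
        have hai : a = i := ha
        subst hai
        have hia : i' = a := congrArg Prod.fst heq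
        subst hia
        by_contra hiT
        rw [if_neg hiT] at heq
        have hb0 : b = 0 := (congrArg Prod.snd heq).symm
        rw [hb0] at hb
        simp at hb
      · intro hi
        refine mem_image.mpr ⟨(i, 1), mem_filter.mpr ⟨?_, rfl⟩, rfl⟩
        exact mem_image.mpr ⟨i, hTS hi, by simp [hi]⟩
  rw [key, card_sigma]
  have : ∀ S ∈ ((univ : Finset (Fin n)).powersetCard r), (S.powerset).card = 2 ^ r := by
    intro S hS
    rw [card_powerset, (mem_powersetCard.mp hS).2]
  rw [Finset.sum_congr rfl this, Finset.sum_const, card_powersetCard, card_univ,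
    Fintype.card_fin, smul_eq_mul, mul_comm]


/-- Move lemma: replacing one vertex keeps us in `Jf`. -/
lemma move_mem_Jf {n r : ℕ} {A : Finset (Fin n × Fin 2)} (hA : A ∈ Jf n r)
    {q : Fin n × Fin 2} (hq : q ∈ A) {p : Fin n × Fin 2}
    (hp : ∀ x ∈ A.erase q, x.1 ≠ p.1) :
    insert p (A.erase q) ∈ Jf n r := by
  obtain ⟨h1, h2⟩ := mem_Jf.mp hA
  have hpnot : p ∉ A.erase q := fun hc => hp p hc rfl
  refine mem_Jf.mpr ⟨indep_iff.mpr ?_, ?_⟩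
  · intro u hu v hv huv
    rcases mem_insert.mp hu with rfl | hu' <;> rcases mem_insert.mp hv with rfl | hv'
    · rfl
    · exact absurd huv.symm (hp v hv')
    · exact absurd huv (hp u hu')
    · exact indep_iff.mp h1 _ (mem_of_mem_erase hu') _ (mem_of_mem_erase hv') huv
  · rw [card_insert_of_notMem hpnot, card_erase_of_mem hq, h2]
    have : 1 ≤ r := by
      rw [← h2]
      exact card_pos.mpr ⟨q, hq⟩
    omega

lemma free_edge {n r : ℕ} (hrn : r < n) {A : Finset (Fin n × Fin 2)} (hA : A ∈ Jf n r) :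
    ∃ k : Fin n, ∀ x ∈ A, x.1 ≠ k := by
  obtain ⟨h1, h2⟩ := mem_Jf.mp hA
  by_contra hc
  push_neg at hc
  have hsub : (univ : Finset (Fin n)) ⊆ A.image Prod.fst := by
    intro k _
    obtain ⟨x, hx, hxk⟩ := hc k
    exact mem_image.mpr ⟨x, hx, hxk⟩
  have := card_le_card hsub
  rw [card_univ, Fintype.card_fin] at this
  have hle : (A.image Prod.fst).card ≤ r := h2 ▸ card_image_le
  omega


lemma sdiff_move {n : ℕ} {D A : Finset (Fin n × Fin 2)} {p q : Fin n × Fin 2}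
    (hq : q ∉ D) : D \ (insert p (A.erase q)) = (D \ A).erase p := by
  ext x
  simp only [mem_sdiff, mem_insert, mem_erase, not_or]
  constructor
  · rintro ⟨hxD, hxp, hxe⟩
    have hxq : x ≠ q := fun h => hq (h ▸ hxD)
    exact ⟨hxp, hxD, fun hxA => hxe ⟨hxq, hxA⟩⟩
  · rintro ⟨hxp, hxD, hxA⟩
    exact ⟨hxD, hxp, fun h => hxA h.2⟩

lemma reach {n r : ℕ} (hrn : r < n) {𝒜 : Finset (Finset (Fin n × Fin 2))}
    (h𝒜J : ∀ A ∈ 𝒜, A ∈ Jf n r)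
    (step : ∀ A ∈ 𝒜, ∀ B ∈ Jf n r, (∀ x ∈ B, flip' x ∉ A) → B ∈ 𝒜) :
    ∀ D ∈ Jf n r, ∀ A ∈ 𝒜, D ∈ 𝒜 := by
  suffices h : ∀ k : ℕ, ∀ A ∈ 𝒜, ∀ D ∈ Jf n r, (D \ A).card = k → D ∈ 𝒜 by
    intro D hD A hA
    exact h _ A hA D hD rfl
  intro k
  induction k with
  | zero =>
    intro A hA D hD hk
    have hsub : D ⊆ A := sdiff_eq_empty_iff_subset.mp (card_eq_zero.mp hk)
    have hcards : A.card ≤ D.card := by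
      rw [(mem_Jf.mp (h𝒜J A hA)).2, (mem_Jf.mp hD).2]
    rwa [eq_of_subset_of_card_le hsub hcards]
  | succ k ih =>
    intro A hA D hD hk
    have hAJ : A ∈ Jf n r := h𝒜J A hA
    obtain ⟨hAind, hAcard⟩ := mem_Jf.mp hAJ
    obtain ⟨hDind, hDcard⟩ := mem_Jf.mp hD
    have hne : (D \ A).Nonempty := by
      rw [← card_pos, hk]; omega
    obtain ⟨p, hpmem⟩ := hne
    obtain ⟨hpD, hpA⟩ := mem_sdiff.mp hpmem
    by_cases hconf : ∃ q ∈ A, q.1 = p.1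
    · -- conflict: A uses edge p.1 with the opposite vertex; two-step move via a free edge
      obtain ⟨q, hqA, hq1⟩ := hconf
      have hqp : q ≠ p := fun h => hpA (h ▸ hqA)
      have hq2 : q.2 ≠ p.2 := fun h => hqp (Prod.ext hq1 h)
      have hqflip : q = flip' p := by
        have h2 : ∀ a b : Fin 2, a ≠ b → a = b + 1 := by decide
        exact Prod.ext hq1 (h2 _ _ hq2)
      have hqD : q ∉ D := by
        intro hc
        exact hqp (indep_iff.mp hDind _ hc _ hpD hq1)
      obtain ⟨k₀, hk₀⟩ := free_edge hrn hAJ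
      set A₁ : Finset (Fin n × Fin 2) := insert (k₀, 0) (A.erase q) with hA₁def
      have hA₁J : A₁ ∈ Jf n r :=
        move_mem_Jf hAJ hqA (fun x hx => hk₀ x (mem_of_mem_erase hx))
      have hA₁ : A₁ ∈ 𝒜 := by
        refine step A hA A₁ hA₁J ?_
        intro x hx
        rcases mem_insert.mp hx with rfl | hx'
        · intro hc
          exact hk₀ _ hc rfl
        · exact flip_notMem hAind (mem_of_mem_erase hx')
      have hA₁ind : IndepFinset (matchingGraph n) A₁ := (mem_Jf.mp hA₁J).1
      set A₂ : Finset (Fin n × Fin 2) := insert p (A.erase q) with hA₂def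
      have hA₂J : A₂ ∈ Jf n r := by
        refine move_mem_Jf hAJ hqA ?_
        intro x hx hx1
        have hxq : x = q :=
          indep_iff.mp hAind _ (mem_of_mem_erase hx) _ hqA (hx1.trans hq1.symm)
        exact (mem_erase.mp hx).1 hxq
      have hA₂ : A₂ ∈ 𝒜 := by
        refine step A₁ hA₁ A₂ hA₂J ?_
        intro x hx
        rcases mem_insert.mp hx with rfl | hx'
        · rw [← hqflip]
          intro hc
          rcases mem_insert.mp hc with h | h
          · exact hk₀ q hqA (congrArg Prod.fst h)
          · exact (mem_erase.mp h).1 rfl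
        · have : x ∈ A₁ := mem_insert_of_mem hx'
          exact flip_notMem hA₁ind this
      refine ih A₂ hA₂ D hD ?_
      rw [sdiff_move hqD, card_erase_of_mem hpmem, hk]; omega
    · -- no conflict: single move
      push_neg at hconf
      have hADne : (A \ D).Nonempty := by
        rw [← card_pos, card_sdiff_comm (hAcard.trans hDcard.symm), hk]
        omega
      obtain ⟨q, hqmem⟩ := hADne
      obtain ⟨hqA, hqD⟩ := mem_sdiff.mp hqmem
      set A' : Finset (Fin n × Fin 2) := insert p (A.erase q) with hA'def
      have hA'J : A' ∈ Jf n r := by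
        refine move_mem_Jf hAJ hqA ?_
        intro x hx
        exact hconf x (mem_of_mem_erase hx)
      have hA' : A' ∈ 𝒜 := by
        refine step A hA A' hA'J ?_
        intro x hx
        rcases mem_insert.mp hx with rfl | hx'
        · intro hc
          exact hconf _ hc rfl
        · exact flip_notMem hAind (mem_of_mem_erase hx')
      refine ih A' hA' D hD ?_
      rw [sdiff_move hqD, card_erase_of_mem hpmem, hk]; omega

end Stmt8

open Stmt8 in
theorem stmt8 (n r : ℕ) (hr : r ≤ n)
    (𝒜 ℬ : Finset (Finset (Fin n × Fin 2)))
    (h𝒜 : ∀ A ∈ 𝒜, IndepFinset (matchingGraph n) A ∧ A.card = r)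
    (hℬ : ∀ B ∈ ℬ, IndepFinset (matchingGraph n) B ∧ B.card = r)
    (hcross : ∀ A ∈ 𝒜, ∀ B ∈ ℬ, (A ∩ B).Nonempty) :
    𝒜.card + ℬ.card ≤ 2 ^ r * n.choose r ∧
      (r < n →
        (𝒜.card + ℬ.card = 2 ^ r * n.choose r ↔
          ((↑𝒜 = {A : Finset (Fin n × Fin 2) |
              IndepFinset (matchingGraph n) A ∧ A.card = r} ∧ ℬ = ∅) ∨
           (↑ℬ = {A : Finset (Fin n × Fin 2) |
              IndepFinset (matchingGraph n) A ∧ A.card = r} ∧ 𝒜 = ∅)))) := by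
  classical
  have h𝒜J : ∀ A ∈ 𝒜, A ∈ Jf n r := fun A hA => mem_Jf.mpr (h𝒜 A hA)
  have hℬJ : ℬ ⊆ Jf n r := fun B hB => mem_Jf.mpr (hℬ B hB)
  have hJset : (↑(Jf n r) : Set (Finset (Fin n × Fin 2))) =
      {A : Finset (Fin n × Fin 2) | IndepFinset (matchingGraph n) A ∧ A.card = r} := by
    ext A
    simp [mem_Jf]
  have hinvol : Function.Involutive
      (fun A : Finset (Fin n × Fin 2) => A.image flip') := fun A => cflip_cflip A
  set 𝒜' := 𝒜.image (fun A => A.image flip') with h𝒜'def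
  have h𝒜'card : 𝒜'.card = 𝒜.card := card_image_of_injective _ hinvol.injective
  have hdisj : Disjoint 𝒜' ℬ := by
    rw [Finset.disjoint_left]
    rintro C hC hCB
    obtain ⟨A, hA, rfl⟩ := Finset.mem_image.mp hC
    exact (hcross A hA _ hCB).ne_empty
      (Finset.disjoint_iff_inter_eq_empty.mp (disjoint_cflip (h𝒜 A hA).1))
  have hsub : 𝒜' ∪ ℬ ⊆ Jf n r := by
    refine Finset.union_subset ?_ hℬJ
    rintro C hC
    obtain ⟨A, hA, rfl⟩ := Finset.mem_image.mp hC
    exact cflip_mem_Jf (h𝒜J A hA)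
  have hcard : 𝒜.card + ℬ.card ≤ (Jf n r).card := by
    rw [← h𝒜'card, ← Finset.card_union_of_disjoint hdisj]
    exact Finset.card_le_card hsub
  have hJcard := card_Jf n r
  refine ⟨hJcard ▸ hcard, ?_⟩
  intro hrn
  constructor
  · intro heq
    have hequ : 𝒜' ∪ ℬ = Jf n r := by
      refine Finset.eq_of_subset_of_card_le hsub ?_
      rw [Finset.card_union_of_disjoint hdisj, h𝒜'card, hJcard, heq]
    by_cases hAe : 𝒜 = ∅
    · right
      have hBeq : ℬ = Jf n r := by
        rw [← hequ, h𝒜'def, hAe]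
        simp
      refine ⟨?_, hAe⟩
      rw [hBeq, hJset]
    · left
      obtain ⟨A₀, hA₀⟩ := Finset.nonempty_iff_ne_empty.mpr hAe
      have step : ∀ A ∈ 𝒜, ∀ B ∈ Jf n r, (∀ x ∈ B, flip' x ∉ A) → B ∈ 𝒜 := by
        intro A hA B hBJ hcompat
        have hCJ : B.image flip' ∈ Jf n r := cflip_mem_Jf hBJ
        have hdisjAC : A ∩ B.image flip' = ∅ := by
          rw [← Finset.disjoint_iff_inter_eq_empty, Finset.disjoint_right]
          rintro x hx
          obtain ⟨y, hy, rfl⟩ := Finset.mem_image.mp hx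
          exact hcompat y hy
        have hCB : B.image flip' ∉ ℬ :=
          fun hc => (hcross A hA _ hc).ne_empty hdisjAC
        have hCU : B.image flip' ∈ 𝒜' ∪ ℬ := hequ ▸ hCJ
        rcases Finset.mem_union.mp hCU with h | h
        · obtain ⟨A₁, hA₁, himg⟩ := Finset.mem_image.mp h
          have hAB : A₁ = B := by
            have h2 := congrArg (fun s => Finset.image flip' s) himg
            simpa only [cflip_cflip] using h2
          exact hAB ▸ hA₁
        · exact absurd h hCB
      have hall : ∀ D ∈ Jf n r, D ∈ 𝒜 :=
        fun D hD => reach hrn h𝒜J step D hD A₀ hA₀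
      have h𝒜eq : 𝒜 = Jf n r := Finset.Subset.antisymm h𝒜J hall
      have hℬe : ℬ = ∅ := by
        rw [← Finset.card_eq_zero]
        have h1 : 𝒜.card = (Jf n r).card := by rw [h𝒜eq]
        omega
      exact ⟨by rw [h𝒜eq, hJset], hℬe⟩
  · rintro (⟨hA, hB⟩ | ⟨hB, hA⟩)
    · have h𝒜eq : 𝒜 = Jf n r := Finset.coe_injective (by rw [hA, hJset])
      rw [h𝒜eq, hB, hJcard]
      simp
    · have hℬeq : ℬ = Jf n r := Finset.coe_injective (by rw [hB, hJset])
      rw [hℬeq, hA, hJcard]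
      simp
end

section
/- For every r ≥ 1 and n ≥ 2, if (A, B) is a cross-intersecting pair of families of independent sets of size r in the cycle C_n, then |A| + |B| ≤ |J^r(C_n)|. -/
theorem stmt10 (n r : ℕ) (hn : 2 ≤ n) (hr : 1 ≤ r)
    (𝒜 ℬ : Finset (Finset (Fin n)))
    (h𝒜 : ∀ A ∈ 𝒜, IndepFinset (SimpleGraph.cycleGraph n) A ∧ A.card = r)
    (hℬ : ∀ B ∈ ℬ, IndepFinset (SimpleGraph.cycleGraph n) B ∧ B.card = r)
    (hcross : ∀ A ∈ 𝒜, ∀ B ∈ ℬ, (A ∩ B).Nonempty) :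
    𝒜.card + ℬ.card ≤
      Set.ncard {A : Finset (Fin n) |
        IndepFinset (SimpleGraph.cycleGraph n) A ∧ A.card = r} := by
  obtain ⟨m, rfl⟩ : ∃ m, n = m + 2 := ⟨n - 2, by omega⟩
  set G := SimpleGraph.cycleGraph (m + 2) with hG
  classical
  set J : Finset (Finset (Fin (m + 2))) :=
    Finset.univ.filter (fun A => IndepFinset G A ∧ A.card = r) with hJ
  have hset : {A : Finset (Fin (m + 2)) | IndepFinset G A ∧ A.card = r} = (J : Set _) := by
    ext A; simp [hJ]
  rw [hset, Set.ncard_coe_finset]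
  -- the shift map
  set σ : Finset (Fin (m + 2)) → Finset (Fin (m + 2)) :=
    fun A => A.image (· + 1) with hσ
  have hadd_inj : Function.Injective (fun x : Fin (m + 2) => x + 1) :=
    add_left_injective 1
  have hσcard : ∀ A, (σ A).card = A.card := fun A =>
    Finset.card_image_of_injective _ hadd_inj
  have hσinj : Function.Injective σ := fun A B h => by
    ext x
    constructor
    · intro hx
      have : x + 1 ∈ σ B := h ▸ Finset.mem_image_of_mem _ hx
      obtain ⟨y, hy, hxy⟩ := Finset.mem_image.1 this
      rwa [← hadd_inj hxy]
    · intro hx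
      have : x + 1 ∈ σ A := h ▸ Finset.mem_image_of_mem _ hx
      obtain ⟨y, hy, hxy⟩ := Finset.mem_image.1 this
      rwa [← hadd_inj hxy]
  have hσindep : ∀ A, IndepFinset G A → IndepFinset G (σ A) := by
    intro A hA u hu v hv hadj
    obtain ⟨a, ha, rfl⟩ := Finset.mem_image.1 hu
    obtain ⟨b, hb, rfl⟩ := Finset.mem_image.1 hv
    apply hA a ha b hb
    rw [hG, SimpleGraph.cycleGraph_adj] at hadj ⊢
    simpa using hadj
  have hσdisj : ∀ A, IndepFinset G A → A ∩ σ A = ∅ := by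
    intro A hA
    rw [Finset.eq_empty_iff_forall_notMem]
    intro x hx
    obtain ⟨hx1, hx2⟩ := Finset.mem_inter.1 hx
    obtain ⟨y, hy, rfl⟩ := Finset.mem_image.1 hx2
    exact hA y hy (y + 1) hx1 (by
      rw [hG, SimpleGraph.cycleGraph_adj]; right; simp)
  -- σ maps 𝒜 into J \ ℬ
  have key : 𝒜.image σ ⊆ J \ ℬ := by
    intro X hX
    obtain ⟨A, hA, rfl⟩ := Finset.mem_image.1 hX
    obtain ⟨hAi, hAc⟩ := h𝒜 A hA
    rw [Finset.mem_sdiff]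
    constructor
    · simp only [hJ, Finset.mem_filter, Finset.mem_univ, true_and]
      exact ⟨hσindep A hAi, by rw [hσcard, hAc]⟩
    · intro hB
      obtain ⟨x, hx⟩ := hcross A hA (σ A) hB
      have := hσdisj A hAi
      rw [this] at hx
      exact absurd hx (Finset.notMem_empty x)
  have hℬJ : ℬ ⊆ J := by
    intro B hB
    simp only [hJ, Finset.mem_filter, Finset.mem_univ, true_and]
    exact hℬ B hB
  have h1 : 𝒜.card ≤ (J \ ℬ).card := by
    calc 𝒜.card = (𝒜.image σ).card :=
          (Finset.card_image_of_injective _ hσinj).symm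
      _ ≤ (J \ ℬ).card := Finset.card_le_card key
  have h2 : (J \ ℬ).card = J.card - ℬ.card := Finset.card_sdiff_of_subset hℬJ
  have h3 : ℬ.card ≤ J.card := Finset.card_le_card hℬJ
  omega
end

section
/- Every chordal graph with at least one vertex has a simplicial vertex, i.e., a vertex whose neighborhood induces a clique. -/
/-- A graph is chordal if it contains no induced cycle on 4 or more vertices. -/
def IsChordal {V : Type*} (G : SimpleGraph V) : Prop :=
  ∀ m : ℕ, 4 ≤ m → ¬ ∃ f : Fin m ↪ V, ∀ i j : Fin m,
    G.Adj (f i) (f j) ↔ (SimpleGraph.cycleGraph m).Adj i j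

set_option linter.unusedVariables false
set_option linter.unusedSectionVars false
open SimpleGraph List

lemma nodup_getElem_inj {V : Type*} {l : List V} (h : l.Nodup) {i j : ℕ}
    (hi : i < l.length) (hj : j < l.length) (hEq : l[i]'hi = l[j]'hj) : i = j := by
  have hinj := List.nodup_iff_injective_getElem.mp h
  have := hinj (a₁ := ⟨i, hi⟩) (a₂ := ⟨j, hj⟩) hEq
  simpa using this

lemma finCyc {m : ℕ} {i j : Fin m} (hij : (i:ℕ) < j) :
    ((i - j : Fin m).val = 1 ∨ (j - i : Fin m).val = 1) ↔
      ((j:ℕ) = i + 1 ∨ ((i:ℕ) = 0 ∧ (j:ℕ) = m - 1)) := by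
  have hi := i.isLt; have hj := j.isLt
  rw [Fin.sub_def, Fin.sub_def]
  simp only []
  have h1 : (m - (j:ℕ) + (i:ℕ)) % m = m - (j:ℕ) + (i:ℕ) :=
    Nat.mod_eq_of_lt (by omega)
  have h2 : (m - (i:ℕ) + (j:ℕ)) % m = (j:ℕ) - (i:ℕ) := by
    have : m - (i:ℕ) + (j:ℕ) = ((j:ℕ) - (i:ℕ)) + m := by omega
    rw [this, Nat.add_mod_right, Nat.mod_eq_of_lt (by omega)]
  rw [h1, h2]
  omega

lemma noCycList {V : Type*} {G : SimpleGraph V}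
    (hG : ∀ m : ℕ, 4 ≤ m → ¬ ∃ f : Fin m ↪ V, ∀ i j : Fin m,
      G.Adj (f i) (f j) ↔ (SimpleGraph.cycleGraph m).Adj i j)
    (L : List V) (h4 : 4 ≤ L.length) (hnd : L.Nodup)
    (hadj : ∀ i j : Fin L.length, (i:ℕ) < j →
      (G.Adj (L.get i) (L.get j) ↔ ((j:ℕ) = i + 1 ∨ ((i:ℕ) = 0 ∧ (j:ℕ) = L.length - 1)))) :
    False := by
  haveI : NeZero L.length := ⟨by omega⟩
  apply hG L.length h4
  refine ⟨⟨L.get, List.nodup_iff_injective_get.mp hnd⟩, fun i j => ?_⟩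
  rw [SimpleGraph.cycleGraph_adj']
  simp only [Function.Embedding.coeFn_mk]
  rcases lt_trichotomy (i:ℕ) (j:ℕ) with h | h | h
  · rw [hadj i j h]; exact (finCyc h).symm
  · have : i = j := Fin.ext h
    subst this
    simp [Fin.sub_self, Fin.val_zero]
  · rw [G.adj_comm, hadj j i h]
    have := finCyc h
    tauto



def GoodPath {V : Type*} (G : SimpleGraph V) (W : Set V) (s t : V) (X : List V) : Prop :=
  X.head? = some s ∧ X.getLast? = some t ∧ X.Chain' G.Adj ∧ ∀ x ∈ X, x ∈ W

lemma getLast?_take_eq {V : Type*} {X : List V} {i : ℕ} (hi : i < X.length) :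
    (X.take (i+1)).getLast? = some (X[i]) := by
  rw [List.getLast?_take, if_neg (by omega)]
  simp [List.getElem?_eq_getElem hi]

lemma goodPath_take {V : Type*} {G : SimpleGraph V} {W s t X} (h : GoodPath G W s t X)
    {i : ℕ} (hi : i < X.length) (ht : X[i] = t) :
    GoodPath G W s t (X.take (i+1)) := by
  obtain ⟨h1, h2, h3, h4⟩ := h
  refine ⟨?_, ?_, h3.take _, fun x hx => h4 x (List.take_subset _ _ hx)⟩
  · rw [List.head?_take, if_neg (by omega)]; exact h1
  · rw [getLast?_take_eq hi, ht]

lemma goodPath_splice {V : Type*} {G : SimpleGraph V} {W s t X} (h : GoodPath G W s t X)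
    {i j : ℕ} (hij : i < j) (hj : j < X.length)
    (hadj : G.Adj (X[i]'(by omega)) (X[j]'hj)) :
    GoodPath G W s t (X.take (i+1) ++ X.drop j) ∧
      (X.take (i+1) ++ X.drop j).length = i + 1 + (X.length - j) := by
  obtain ⟨h1, h2, h3, h4⟩ := h
  have hdne : X.drop j ≠ [] := by
    simp [List.drop_eq_nil_iff]; omega
  refine ⟨⟨?_, ?_, ?_, ?_⟩, ?_⟩
  · have hXne : X ≠ [] := List.ne_nil_of_length_pos (by omega)
    rw [List.head?_append_of_ne_nil _ (by simp [List.take_eq_nil_iff, hXne])]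
    rw [List.head?_take, if_neg (by omega)]; exact h1
  · rw [List.getLast?_append_of_ne_nil _ hdne, List.getLast?_drop, if_neg (by omega)]
    exact h2
  · change List.IsChain _ _; rw [List.isChain_append]
    refine ⟨h3.take _, h3.drop _, fun x hx y hy => ?_⟩
    rw [getLast?_take_eq (by omega : i < X.length)] at hx
    rw [List.head?_drop, List.getElem?_eq_getElem hj] at hy
    simp only [Option.mem_def, Option.some_inj] at hx hy
    cases hx; cases hy; exact hadj
  · intro x hx
    rcases List.mem_append.mp hx with hx | hx
    · exact h4 x (List.take_subset _ _ hx)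
    · exact h4 x (List.drop_subset _ _ hx)
  · rw [List.length_append, List.length_take, List.length_drop]
    omega

lemma exists_chordless {V : Type*} {G : SimpleGraph V} {W : Set V} {s t : V}
    (hst : s ≠ t) (hna : ¬ G.Adj s t) (hex : ∃ X, GoodPath G W s t X) :
    ∃ X : List V, GoodPath G W s t X ∧ 3 ≤ X.length ∧ X.Nodup ∧
      ∀ i j : ℕ, (hij : i < j) → (hj : j < X.length) →
        (G.Adj (X[i]'(by omega)) (X[j]'hj) ↔ j = i + 1) := by
  classical
  have hexn : ∃ n, ∃ X, GoodPath G W s t X ∧ X.length = n := by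
    obtain ⟨X, hX⟩ := hex; exact ⟨X.length, X, hX, rfl⟩
  obtain ⟨X, hX, hmin⟩ : ∃ X, GoodPath G W s t X ∧
      ∀ Y, GoodPath G W s t Y → X.length ≤ Y.length := by
    obtain ⟨X, hX, hlen⟩ := Nat.find_spec hexn
    refine ⟨X, hX, fun Y hY => ?_⟩
    rw [hlen]
    by_contra h
    exact Nat.find_min hexn (by omega) ⟨Y, hY, rfl⟩
  clear hexn
  have hchain : ∀ i : ℕ, (h : i + 1 < X.length) →
      G.Adj (X[i]'(by omega)) (X[i+1]'h) := by
    intro i h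
    have := List.isChain_iff_getElem.mp hX.2.2.1 i (by omega)
    simpa using this
  have hchord : ∀ i j : ℕ, (hij : i + 1 < j) → (hj : j < X.length) →
      ¬ G.Adj (X[i]'(by omega)) (X[j]'hj) := by
    intro i j hij hj hadj
    obtain ⟨hgp, hl⟩ := goodPath_splice hX (by omega : i < j) hj hadj
    have := hmin _ hgp
    rw [hl] at this
    omega
  have hXlast : X[X.length - 1]'(by
      rcases X with _ | ⟨a, Y⟩
      · exact absurd hX.1 (by simp)
      · simp) = t := by
    have := hX.2.1
    have hpos : 0 < X.length := by
      rcases X with _ | ⟨a, Y⟩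
      · exact absurd hX.1 (by simp)
      · simp
    rw [List.getLast?_eq_getElem?, List.getElem?_eq_getElem (by omega : X.length - 1 < X.length)] at this
    exact Option.some_inj.mp this
  have hpos : 0 < X.length := by
    rcases X with _ | ⟨a, Y⟩
    · exact absurd hX.1 (by simp)
    · simp
  have hnd : X.Nodup := by
    rw [List.nodup_iff_injective_getElem]
    rintro ⟨i, hi⟩ ⟨j, hj⟩ hEq
    simp only at hEq
    by_contra hne
    simp only [Fin.mk.injEq] at hne
    have key : ∀ i j : ℕ, (hi : i < X.length) → (hj : j < X.length) → i < j →
        X[i]'hi = X[j]'hj → False := by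
      intro i j hi hj hlt hEq
      rcases Nat.lt_or_ge (j+1) X.length with hj1 | hj1
      · have hadj : G.Adj (X[i]'(by omega)) (X[j+1]'hj1) := by
          rw [hEq]; exact hchain j hj1
        obtain ⟨hgp, hl⟩ := goodPath_splice hX (by omega : i < j + 1) hj1 hadj
        have := hmin _ hgp
        omega
      · have hjl : j = X.length - 1 := by omega
        subst hjl
        have hgp := goodPath_take hX hi (by rw [hEq, hXlast])
        have := hmin _ hgp
        rw [List.length_take] at this
        omega
    rcases Nat.lt_or_ge i j with hlt | hge
    · exact key i j hi hj hlt hEq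
    · exact key j i hj hi (by omega) hEq.symm
  have hX0 : X[0]'hpos = s := by
    have := hX.1
    rw [List.head?_eq_getElem?, List.getElem?_eq_getElem hpos] at this
    exact Option.some_inj.mp this
  have h2 : 2 ≤ X.length := by
    by_contra h
    apply hst
    rw [← hX0, ← hXlast]
    congr 1
    omega
  have h3 : 3 ≤ X.length := by
    by_contra h
    have h2' : X.length = 2 := by omega
    apply hna
    have hc := hchain 0 (by omega)
    rw [hX0] at hc
    have h1 : X[1]'(by omega) = t := by
      rw [← hXlast]
      congr 1
      omega
    rw [h1] at hc
    exact hc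
  refine ⟨X, hX, h3, hnd, fun i j hij hj => ?_⟩
  constructor
  · intro hadj
    by_contra hne'
    exact hchord i j (by omega) hj hadj
  · rintro rfl
    exact hchain i hj

lemma goodPath_head {V : Type*} {G : SimpleGraph V} {W s t X} (h : GoodPath G W s t X)
    (h0 : 0 < X.length) : X[0]'h0 = s := by
  have := h.1
  rw [List.head?_eq_getElem?, List.getElem?_eq_getElem h0] at this
  exact Option.some_inj.mp this

lemma goodPath_last {V : Type*} {G : SimpleGraph V} {W s t X} (h : GoodPath G W s t X)
    (h0 : 0 < X.length) : X[X.length - 1]'(by omega) = t := by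
  have := h.2.1
  rw [List.getLast?_eq_getElem?, List.getElem?_eq_getElem (by omega : X.length - 1 < X.length)] at this
  exact Option.some_inj.mp this

lemma goodPath_interior {V : Type*} {G : SimpleGraph V} {W : Set V} {s t : V} {X : List V}
    (h : GoodPath G W s t X) (hnd : X.Nodup) {A : Set V}
    (hW : W = insert s (insert t A)) {i : ℕ} (h0 : 0 < i) (hi : i < X.length - 1) :
    X[i]'(by omega) ∈ A := by
  have hmem : X[i]'(by omega) ∈ W := h.2.2.2 _ (List.getElem_mem _)
  rw [hW] at hmem
  rcases hmem with hs | ht | hA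
  · exfalso
    have h0' : (0:ℕ) < X.length := by omega
    have heq : X[i]'(by omega) = X[0]'h0' := by rw [hs, goodPath_head h h0']
    have := nodup_getElem_inj hnd (by omega) h0' heq
    omega
  · exfalso
    have heq : X[i]'(by omega) = X[X.length - 1]'(by omega) := by
      rw [ht, goodPath_last h (by omega)]
    have := nodup_getElem_inj hnd (by omega) (by omega) heq
    omega
  · exact hA

lemma getElem_idx_congr {V : Type*} {l : List V} {i j : ℕ} (h : i = j) (hi : i < l.length) :
    l[i]'hi = l[j]'(h ▸ hi) := by subst h; rfl

lemma glue {V : Type*} {G : SimpleGraph V} {s t : V} {A B : Set V}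
    (hG : ∀ m : ℕ, 4 ≤ m → ¬ ∃ f : Fin m ↪ V, ∀ i j : Fin m,
      G.Adj (f i) (f j) ↔ (SimpleGraph.cycleGraph m).Adj i j)
    (hAB : ∀ x, x ∈ A → ∀ y, y ∈ B → ¬ G.Adj x y ∧ x ≠ y)
    (hsA : s ∉ A) (htA : t ∉ A) (hsB : s ∉ B) (htB : t ∉ B)
    (hst : s ≠ t) (hna : ¬ G.Adj s t)
    {XA XB : List V}
    (hA : GoodPath G (insert s (insert t A)) s t XA) (hA3 : 3 ≤ XA.length) (hAnd : XA.Nodup)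
    (hAc : ∀ i j : ℕ, (hij : i < j) → (hj : j < XA.length) →
      (G.Adj (XA[i]'(by omega)) (XA[j]'hj) ↔ j = i + 1))
    (hB : GoodPath G (insert s (insert t B)) s t XB) (hB3 : 3 ≤ XB.length) (hBnd : XB.Nodup)
    (hBc : ∀ i j : ℕ, (hij : i < j) → (hj : j < XB.length) →
      (G.Adj (XB[i]'(by omega)) (XB[j]'hj) ↔ j = i + 1)) :
    False := by
  classical
  set M : List V := ((XB.drop 1).dropLast).reverse with hM
  set L : List V := XA ++ M with hLdef
  have hMlen : M.length = XB.length - 2 := by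
    simp [hM]; omega
  have hLlen : L.length = XA.length + XB.length - 2 := by
    simp [hLdef, hMlen]
    omega
  have hMget : ∀ r : ℕ, (hr : r < M.length) →
      M[r]'hr = XB[XB.length - 2 - r]'(by omega) := by
    intro r hr
    have hr' := hr
    rw [hMlen] at hr'
    simp only [hM]
    rw [List.getElem_reverse]
    rw [List.getElem_dropLast, List.getElem_drop]
    apply getElem_idx_congr
    simp
    omega
  have hL1 : ∀ i : ℕ, (hi : i < XA.length) → L[i]'(by rw [hLlen]; omega) = XA[i]'hi := by
    intro i hi
    simp only [hLdef]
    exact List.getElem_append_left hi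
  have hL2 : ∀ i : ℕ, (hge : XA.length ≤ i) → (hi : i < L.length) →
      L[i]'hi = XB[XA.length + XB.length - 2 - i]'(by rw [hLlen] at hi; omega) := by
    intro i hge hi
    have hi' := hi
    rw [hLlen] at hi'
    simp only [hLdef]
    rw [List.getElem_append_right hge]
    rw [hMget (i - XA.length) (by rw [hMlen]; omega)]
    apply getElem_idx_congr
    omega
  have hXA0 : XA[0]'(by omega) = s := goodPath_head hA (by omega)
  have hXAl : XA[XA.length - 1]'(by omega) = t := goodPath_last hA (by omega)
  have hXB0 : XB[0]'(by omega) = s := goodPath_head hB (by omega)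
  have hXBl : XB[XB.length - 1]'(by omega) = t := goodPath_last hB (by omega)
  have hAint : ∀ i : ℕ, (h0 : 0 < i) → (hitop : i < XA.length - 1) → XA[i]'(by omega) ∈ A :=
    fun i h0 hi => goodPath_interior hA hAnd rfl h0 hi
  have hBint : ∀ i : ℕ, (h0 : 0 < i) → (hitop : i < XB.length - 1) → XB[i]'(by omega) ∈ B :=
    fun i h0 hi => goodPath_interior hB hBnd rfl h0 hi
  have hndL : L.Nodup := by
    rw [List.nodup_iff_injective_getElem]
    rintro ⟨i, hi⟩ ⟨j, hj⟩ hEq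
    simp only at hEq
    have key : ∀ i j : ℕ, (hi : i < L.length) → (hj : j < L.length) → i < j →
        L[i]'hi = L[j]'hj → False := by
      intro i j hi hj hlt hEq
      have hi' := hi; have hj' := hj
      rw [hLlen] at hi' hj'
      rcases Nat.lt_or_ge j XA.length with hjA | hjB
      · rw [hL1 i (by omega), hL1 j hjA] at hEq
        have := nodup_getElem_inj hAnd (by omega) hjA hEq
        omega
      rcases Nat.lt_or_ge i XA.length with hiA | hiB
      · rw [hL1 i hiA, hL2 j hjB hj] at hEq
        set j' := XA.length + XB.length - 2 - j with hj'def
        have hjB' : XB[j']'(by omega) ∈ B := hBint j' (by omega) (by omega)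
        have hiW : XA[i]'(by omega) ∈ insert s (insert t A) :=
          hA.2.2.2 _ (List.getElem_mem _)
        rcases hiW with h1 | h2 | h3
        · rw [hEq] at h1; rw [← h1] at hsB; exact hsB hjB'
        · rw [hEq] at h2; rw [← h2] at htB; exact htB hjB'
        · exact (hAB _ h3 _ hjB').2 hEq
      · rw [hL2 i hiB hi, hL2 j hjB hj] at hEq
        have := nodup_getElem_inj hBnd (by omega) (by omega) hEq
        omega
    rcases lt_trichotomy i j with h | h | h
    · exact (key i j hi hj h hEq).elim
    · exact Fin.ext h
    · exact (key j i hj hi h hEq.symm).elim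
  apply noCycList hG L (by omega) hndL
  have key : ∀ i j : ℕ, (hij : i < j) → (hi : i < L.length) → (hj : j < L.length) →
      (G.Adj (L[i]'hi) (L[j]'hj) ↔ (j = i + 1 ∨ (i = 0 ∧ j = L.length - 1))) := by
    intro i j hij hi hj
    have hi' := hi; have hj' := hj
    rw [hLlen] at hi' hj'
    rcases Nat.lt_or_ge j XA.length with hjA | hjB
    · rw [hL1 i (by omega), hL1 j hjA]
      rw [hAc i j hij hjA]
      constructor
      · tauto
      · rintro (h | ⟨h0, hl⟩)
        · exact h
        · exfalso; rw [hLlen] at hl; omega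
    rcases Nat.lt_or_ge i XA.length with hiA | hiB
    · rw [hL1 i hiA, hL2 j hjB hj]
      set j' := XA.length + XB.length - 2 - j with hj'def
      have hj'b : 1 ≤ j' ∧ j' ≤ XB.length - 2 := by omega
      rcases Nat.eq_zero_or_pos i with h0 | h0
      · subst h0
        rw [hXA0, ← hXB0, hBc 0 j' (by omega) (by omega)]
        rw [hLlen]
        omega
      rcases Nat.lt_or_ge i (XA.length - 1) with hitop | hitop
      · have hxa : XA[i]'(by omega) ∈ A := hAint i h0 hitop
        have hxb : XB[j']'(by omega) ∈ B := hBint j' (by omega) (by omega)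
        have := (hAB _ hxa _ hxb).1
        constructor
        · intro h; exact absurd h this
        · rintro (h | ⟨h1, h2⟩) <;> omega
      · have hieq : i = XA.length - 1 := by omega
        rw [getElem_idx_congr hieq, hXAl, ← hXBl, G.adj_comm,
          hBc j' (XB.length - 1) (by omega) (by omega)]
        rw [hLlen]
        omega
    · rw [hL2 i hiB hi, hL2 j hjB hj]
      rw [G.adj_comm]
      rw [hBc (XA.length + XB.length - 2 - j) (XA.length + XB.length - 2 - i)
        (by omega) (by omega)]
      rw [hLlen]
      omega
  rintro ⟨i, hi⟩ ⟨j, hj⟩ hij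
  simp only [List.get_eq_getElem]
  exact key i j hij hi hj
section Part2
open SimpleGraph List

def SimplicialVtx {V : Type*} (G : SimpleGraph V) (v : V) : Prop :=
  ∀ a b : V, G.Adj v a → G.Adj v b → a ≠ b → G.Adj a b

def Rch {V : Type*} [DecidableEq V] (G : SimpleGraph V) (S : Finset V) (x y : V) : Prop :=
  Relation.ReflTransGen (fun u v => G.Adj u v ∧ u ∉ S ∧ v ∉ S) x y

variable {V : Type*} [DecidableEq V] {G : SimpleGraph V} {S : Finset V}

lemma rch_symm {x y : V} (h : Rch G S x y) : Rch G S y x :=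
  haveI : Std.Symm (fun u v : V => G.Adj u v ∧ u ∉ S ∧ v ∉ S) := ⟨fun _ _ h => ⟨h.1.symm, h.2.2, h.2.1⟩⟩
  Std.Symm.symm (r := Relation.ReflTransGen _) _ _ h

lemma rch_not_mem {c x : V} (h : Rch G S c x) (hc : c ∉ S) : x ∉ S := by
  rcases Relation.ReflTransGen.cases_tail h with heq | ⟨u, _, hstep⟩
  · exact heq ▸ hc
  · exact hstep.2.2

lemma rch_tail' {c x y : V} (h : Rch G S c x) (hc : c ∉ S) (hadj : G.Adj x y)
    (hy : y ∉ S) : Rch G S c y :=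
  h.tail ⟨hadj, rch_not_mem h hc, hy⟩

lemma rch_split {sv : V} (hs : sv ∈ S) {u b : V}
    (h : Rch G (S.erase sv) u b) :
    u ∉ S → (Rch G S u b ∨ ∃ x, Rch G S u x ∧ G.Adj x sv) := by
  induction h using Relation.ReflTransGen.head_induction_on with
  | refl => intro _; left; exact Relation.ReflTransGen.refl
  | head hstep htail ih =>
    rename_i u' v'
    intro hu
    by_cases hv : v' = sv
    · right; exact ⟨u', Relation.ReflTransGen.refl, hv ▸ hstep.1⟩
    · have hvS : v' ∉ S := fun hmem => hstep.2.2 (Finset.mem_erase.mpr ⟨hv, hmem⟩)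
      rcases ih hvS with h | ⟨x, hx, hxs⟩
      · exact Or.inl (Relation.ReflTransGen.head ⟨hstep.1, hu, hvS⟩ h)
      · exact Or.inr ⟨x, Relation.ReflTransGen.head ⟨hstep.1, hu, hvS⟩ hx, hxs⟩

lemma rch_to_comp {c x y : V} (h : Rch G S x y) :
    Rch G S c x → Relation.ReflTransGen
      (fun u v => G.Adj u v ∧ Rch G S c u ∧ Rch G S c v) x y := by
  induction h using Relation.ReflTransGen.head_induction_on with
  | refl => intro _; exact Relation.ReflTransGen.refl
  | head hstep htail ih =>
    rename_i u' v'
    intro hcu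
    have hcv : Rch G S c v' := hcu.tail hstep
    exact Relation.ReflTransGen.head ⟨hstep.1, hcu, hcv⟩ (ih hcv)

lemma chain_all {α : Type*} {r : α → α → Prop} {p : α → Prop}
    (hp : ∀ u v, r u v → p v) :
    ∀ (l : List α) (x : α), List.Chain r x l → ∀ z ∈ l, p z := by
  intro l
  induction l with
  | nil => simp
  | cons a l ih =>
    intro x hc z hz
    rcases List.chain_cons.mp hc with ⟨hra, hcl⟩
    rcases List.mem_cons.mp hz with rfl | hz
    · exact hp _ _ hra
    · exact ih a hcl z hz

lemma goodPath_exists {G : SimpleGraph V} {C : Set V} {s t x y : V}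
    (hxy : Relation.ReflTransGen (fun u v => G.Adj u v ∧ u ∈ C ∧ v ∈ C) x y)
    (hx : x ∈ C) (hsx : G.Adj s x) (hyt : G.Adj y t) :
    ∃ X, GoodPath G (insert s (insert t C)) s t X := by
  obtain ⟨l, hchain, hlast⟩ := List.exists_isChain_cons_of_relationReflTransGen hxy
  refine ⟨(s :: (x :: l)) ++ [t], ?_, ?_, ?_, ?_⟩
  · rfl
  · rw [List.getLast?_append_of_ne_nil _ (by simp)]; rfl
  · apply List.IsChain.append
    · show List.IsChain G.Adj (s :: x :: l)
      rw [List.isChain_cons_cons]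
      exact ⟨hsx, hchain.imp (fun a b h => h.1)⟩
    · simp
    · intro p hp q hq
      simp only [List.head?_cons, Option.mem_def, Option.some_inj] at hq
      rw [List.getLast?_eq_getLast (by simp), Option.mem_def, Option.some_inj] at hp
      have : (s :: x :: l).getLast (by simp) = (x :: l).getLast (by simp) :=
        List.getLast_cons (by simp)
      rw [this, hlast] at hp
      rw [← hp, ← hq] at *
      exact hyt
  · intro z hz
    rcases List.mem_append.mp hz with hz | hz
    · rcases List.mem_cons.mp hz with rfl | hz
      · exact Set.mem_insert _ _
      · have hzC : z ∈ C := by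
          rcases List.mem_cons.mp hz with rfl | hz
          · exact hx
          · exact chain_all (fun u v h => h.2.2) l x hchain z hz
        exact Set.mem_insert_of_mem _ (Set.mem_insert_of_mem _ hzC)
    · simp only [List.mem_singleton] at hz
      exact hz ▸ Set.mem_insert_of_mem _ (Set.mem_insert _ _)

end Part2
section Part3
open SimpleGraph List

universe u

def IsChordal' {V : Type*} (G : SimpleGraph V) : Prop :=
  ∀ m : ℕ, 4 ≤ m → ¬ ∃ f : Fin m ↪ V, ∀ i j : Fin m,
    G.Adj (f i) (f j) ↔ (SimpleGraph.cycleGraph m).Adj i j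

lemma chordal_induce {V : Type*} {G : SimpleGraph V} (hG : IsChordal' G) (s : Set V) :
    IsChordal' (G.induce s) := by
  intro m hm h
  obtain ⟨f, hf⟩ := h
  refine hG m hm ⟨f.trans (Function.Embedding.subtype _), fun i j => ?_⟩
  have := hf i j
  simpa using this

set_option maxHeartbeats 1000000 in
lemma dichotomy : ∀ (n : ℕ) (V : Type u) [Fintype V] (G : SimpleGraph V),
    Fintype.card V = n → IsChordal' G →
    (∀ x y : V, x ≠ y → G.Adj x y) ∨
      ∃ u w : V, u ≠ w ∧ ¬ G.Adj u w ∧ SimplicialVtx G u ∧ SimplicialVtx G w := by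
  intro n
  induction n using Nat.strong_induction_on with
  | _ n IH =>
  intro V instF G hcard hG
  classical
  by_cases hcomp : ∀ x y : V, x ≠ y → G.Adj x y
  · exact Or.inl hcomp
  right
  push_neg at hcomp
  obtain ⟨a, b, hab, hnadj⟩ := hcomp
  set Sep : Finset V → Prop := fun S => a ∉ S ∧ b ∉ S ∧ ¬ Rch G S a b with hSepDef
  have hSep0 : Sep ((Finset.univ.erase a).erase b) := by
    refine ⟨by simp [Finset.mem_erase], by simp [Finset.mem_erase], ?_⟩
    intro h
    rcases Relation.ReflTransGen.cases_head h with heq | ⟨c, ⟨hadj, _, hc⟩, _⟩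
    · exact hab heq
    · have hcc : c = b ∨ c = a := by
        by_contra hcc
        push_neg at hcc
        exact hc (by simp [Finset.mem_erase, hcc.1, hcc.2])
      rcases hcc with rfl | rfl
      · exact hnadj hadj
      · exact G.loopless.irrefl _ hadj
  obtain ⟨S, hS, hSmin⟩ : ∃ S, Sep S ∧ ∀ T, Sep T → S.card ≤ T.card := by
    have hexn : ∃ nn, ∃ S, Sep S ∧ S.card = nn := ⟨_, _, hSep0, rfl⟩
    obtain ⟨S, hS, hlen⟩ := Nat.find_spec hexn
    refine ⟨S, hS, fun T hT => ?_⟩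
    rw [hlen]
    by_contra h
    exact Nat.find_min hexn (by omega) ⟨T, hT, rfl⟩
  obtain ⟨haS, hbS, hnR⟩ := hS
  have hnbr : ∀ s ∈ S, (∃ x, Rch G S a x ∧ G.Adj x s) ∧ (∃ y, Rch G S b y ∧ G.Adj y s) := by
    intro s hs
    have hcard' : (S.erase s).card < S.card := Finset.card_erase_lt_of_mem hs
    have hnsep : ¬ Sep (S.erase s) := fun h => by
      have := hSmin _ h; omega
    have hR' : Rch G (S.erase s) a b := by
      by_contra h
      exact hnsep ⟨fun hm => haS (Finset.mem_of_mem_erase hm),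
        fun hm => hbS (Finset.mem_of_mem_erase hm), h⟩
    constructor
    · rcases rch_split hs hR' haS with h | h
      · exact (hnR h).elim
      · exact h
    · rcases rch_split hs (rch_symm hR') hbS with h | h
      · exact (hnR (rch_symm h)).elim
      · exact h
  have hcross : ∀ x, Rch G S a x → ∀ y, Rch G S b y → ¬ G.Adj x y ∧ x ≠ y := by
    intro x hx y hy
    constructor
    · intro hadj
      exact hnR ((rch_tail' hx haS hadj (rch_not_mem hy hbS)).trans (rch_symm hy))
    · rintro rfl
      exact hnR (hx.trans (rch_symm hy))
  have hclique : ∀ s ∈ S, ∀ t ∈ S, s ≠ t → G.Adj s t := by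
    intro s hs t ht hstn
    by_contra hna
    obtain ⟨⟨xA, hxA, hxAs⟩, ⟨xB, hxB, hxBs⟩⟩ := hnbr s hs
    obtain ⟨⟨yA, hyA, hyAt⟩, ⟨yB, hyB, hyBt⟩⟩ := hnbr t ht
    have hgpA : ∃ X, GoodPath G (insert s (insert t {x | Rch G S a x})) s t X := by
      refine goodPath_exists (x := xA) (y := yA) ?_ hxA hxAs.symm hyAt
      exact rch_to_comp ((rch_symm hxA).trans hyA) hxA
    have hgpB : ∃ X, GoodPath G (insert s (insert t {x | Rch G S b x})) s t X := by
      refine goodPath_exists (x := xB) (y := yB) ?_ hxB hxBs.symm hyBt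
      exact rch_to_comp ((rch_symm hxB).trans hyB) hxB
    obtain ⟨XA, hXA, hXA3, hXAnd, hXAc⟩ := exists_chordless hstn hna hgpA
    obtain ⟨XB, hXB, hXB3, hXBnd, hXBc⟩ := exists_chordless hstn hna hgpB
    exact glue hG (fun x hx y hy => hcross x hx y hy)
      (fun h => rch_not_mem h haS hs) (fun h => rch_not_mem h haS ht)
      (fun h => rch_not_mem h hbS hs) (fun h => rch_not_mem h hbS ht)
      hstn hna hXA hXA3 hXAnd hXAc hXB hXB3 hXBnd hXBc
  have hside : ∀ c d : V, c ∉ S → d ∉ S → ¬ Rch G S c d →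
      ∃ u, Rch G S c u ∧ SimplicialVtx G u := by
    intro c d hcS hdS hncd
    set C : Set V := {x | Rch G S c x} ∪ ↑S with hC
    have hdC : d ∉ C := by
      intro h
      rcases h with h | h
      · exact hncd h
      · exact hdS h
    haveI : DecidablePred (· ∈ C) := Classical.decPred _
    have hcardC : Fintype.card ↥C < n := by
      rw [← hcard]
      have h1 : Nat.card ↥C < Nat.card V := Finite.card_subtype_lt (p := (· ∈ C)) hdC
      rwa [Nat.card_eq_fintype_card, Nat.card_eq_fintype_card] at h1
    have hGC := chordal_induce hG C
    have hmemC : ∀ x : V, Rch G S c x → x ∈ C := fun x h => Or.inl h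
    have hnbrC : ∀ z x : V, Rch G S c z → G.Adj z x → x ∈ C := by
      intro z x hz hzadj
      by_cases hxS : x ∈ S
      · exact Or.inr hxS
      · exact Or.inl (rch_tail' hz hcS hzadj hxS)
    rcases IH _ hcardC ↥C (G.induce C) rfl hGC with hcomp' | ⟨u, w, huw, hnuw, hu, hw⟩
    · refine ⟨c, Relation.ReflTransGen.refl, ?_⟩
      intro x y hcx hcy hxy
      have hxC : x ∈ C := hnbrC c x Relation.ReflTransGen.refl hcx
      have hyC : y ∈ C := hnbrC c y Relation.ReflTransGen.refl hcy
      have := hcomp' ⟨x, hxC⟩ ⟨y, hyC⟩ (fun h => hxy (congrArg Subtype.val h))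
      simpa using this
    · have hgen : ∀ z : ↥C, SimplicialVtx (G.induce C) z → Rch G S c (z : V) →
          ∃ u, Rch G S c u ∧ SimplicialVtx G u := by
        intro z hz hcz
        refine ⟨(z : V), hcz, ?_⟩
        intro x y hzx hzy hxy
        have hxC : x ∈ C := hnbrC _ x hcz hzx
        have hyC : y ∈ C := hnbrC _ y hcz hzy
        have h1 : (G.induce C).Adj z ⟨x, hxC⟩ := by simpa using hzx
        have h2 : (G.induce C).Adj z ⟨y, hyC⟩ := by simpa using hzy
        have := hz _ _ h1 h2 (fun h => hxy (congrArg Subtype.val h))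
        simpa using this
      by_cases huC : Rch G S c (u : V)
      · exact hgen u hu huC
      by_cases hwC : Rch G S c (w : V)
      · exact hgen w hw hwC
      · exfalso
        have huS : (u : V) ∈ S := by
          rcases u.2 with h | h
          · exact (huC h).elim
          · exact h
        have hwS : (w : V) ∈ S := by
          rcases w.2 with h | h
          · exact (hwC h).elim
          · exact h
        apply hnuw
        have := hclique _ huS _ hwS (fun h => huw (Subtype.ext h))
        simpa using this
  obtain ⟨u, huA, hu⟩ := hside a b haS hbS hnR
  obtain ⟨w, hwB, hw⟩ := hside b a hbS haS (fun h => hnR (rch_symm h))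
  exact ⟨u, w, (hcross _ huA _ hwB).2, (hcross _ huA _ hwB).1, hu, hw⟩

end Part3

theorem stmt13 {V : Type*} [Fintype V] [Nonempty V] (G : SimpleGraph V)
    (hG : IsChordal G) :
    ∃ v : V, ∀ a b : V, G.Adj v a → G.Adj v b → a ≠ b → G.Adj a b := by
  classical
  have hG' : IsChordal' G := hG
  rcases dichotomy (Fintype.card V) V G rfl hG' with h | ⟨u, w, _, hnuw, hu, _⟩
  · exact ⟨Classical.arbitrary V, fun x y hx hy hxy => h x y hxy⟩
  · exact ⟨u, hu⟩
end

section
/- Let G be a graph with vertices v1, v2 where N[v1] ⊆ N[v2], and let (A, B) be a cross-intersecting pair of independent r-sets of G. With the compressions f, g as above, let Ā = { A ∈ f(A) : v2 ∉ A } and B̄ = { B ∈ g(B) : v2 ∉ B }. Then (Ā, B̄) is a cross-intersecting pair of independent r-sets in G - v2. -/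
/-- The closed neighborhood `N[v]`. -/
def closedNbhd {V : Type*} (G : SimpleGraph V) (v : V) : Set V :=
  {u | u = v ∨ G.Adj u v}

/-- The compression replacing `v2` by `v1` in `A`, provided `v2 ∈ A` and the
resulting set is not already in the family `𝒜`. -/
def compress {V : Type*} [DecidableEq V] (v1 v2 : V)
    (𝒜 : Finset (Finset V)) (A : Finset V) : Finset V :=
  if v2 ∈ A ∧ insert v1 (A.erase v2) ∉ 𝒜 then insert v1 (A.erase v2) else A

lemma v1_notMem_erase {V : Type*} [DecidableEq V] {G : SimpleGraph V} {v1 v2 : V}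
    (h : closedNbhd G v1 ⊆ closedNbhd G v2) {A : Finset V}
    (hA : IndepFinset G A) (hv2 : v2 ∈ A) : v1 ∉ A.erase v2 := by
  intro hm
  rcases h (Or.inl rfl : v1 ∈ closedNbhd G v1) with heq | hadj
  · exact Finset.ne_of_mem_erase hm heq
  · exact hA v1 (Finset.mem_of_mem_erase hm) v2 hv2 hadj

lemma indep_compressed {V : Type*} [DecidableEq V] {G : SimpleGraph V} {v1 v2 : V}
    (h : closedNbhd G v1 ⊆ closedNbhd G v2) {A : Finset V}
    (hA : IndepFinset G A) (hv2 : v2 ∈ A) :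
    IndepFinset G (insert v1 (A.erase v2)) := by
  intro u hu v hv
  simp only [Finset.mem_insert, Finset.mem_erase] at hu hv
  rcases hu with heq | ⟨hu2, huA⟩
  · rw [heq]
    rcases hv with heq2 | ⟨hv2', hvA⟩
    · rw [heq2]; exact fun hadj => G.irrefl hadj
    · intro hadj
      rcases h (Or.inr hadj.symm : v ∈ closedNbhd G v1) with rfl | hadj2
      · exact hv2' rfl
      · exact hA v hvA v2 hv2 hadj2
  · rcases hv with heq | ⟨hv2', hvA⟩
    · rw [heq]
      intro hadj
      rcases h (Or.inr hadj : u ∈ closedNbhd G v1) with rfl | hadj2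
      · exact hu2 rfl
      · exact hA u huA v2 hv2 hadj2
    · exact hA u huA v hvA

lemma card_compressed {V : Type*} [DecidableEq V] {G : SimpleGraph V} {v1 v2 : V}
    (h : closedNbhd G v1 ⊆ closedNbhd G v2) {A : Finset V}
    (hA : IndepFinset G A) (hv2 : v2 ∈ A) :
    (insert v1 (A.erase v2)).card = A.card := by
  rw [Finset.card_insert_of_notMem (v1_notMem_erase h hA hv2),
    Finset.card_erase_of_mem hv2]
  exact Nat.succ_pred_eq_of_pos (Finset.card_pos.mpr ⟨v2, hv2⟩)

lemma family_prop {V : Type*} [DecidableEq V] {G : SimpleGraph V} {v1 v2 : V}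
    (h : closedNbhd G v1 ⊆ closedNbhd G v2) {r : ℕ} {𝒜 : Finset (Finset V)}
    (h𝒜 : ∀ A ∈ 𝒜, IndepFinset G A ∧ A.card = r) :
    ∀ S ∈ (𝒜.image (compress v1 v2 𝒜)).filter (fun A => v2 ∉ A),
      ↑S ⊆ {u : V | u ≠ v2} ∧ IndepFinset G S ∧ S.card = r := by
  intro S hS
  rw [Finset.mem_filter, Finset.mem_image] at hS
  obtain ⟨⟨A, hAmem, rfl⟩, hv2S⟩ := hS
  refine ⟨fun u hu => ?_, ?_⟩
  · intro huv; exact hv2S (huv ▸ hu)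
  · obtain ⟨hInd, hCard⟩ := h𝒜 A hAmem
    unfold compress
    split_ifs with hc
    · exact ⟨indep_compressed h hInd hc.1, (card_compressed h hInd hc.1).trans hCard⟩
    · exact ⟨hInd, hCard⟩

theorem stmt15 {V : Type*} [DecidableEq V] (G : SimpleGraph V) (v1 v2 : V)
    (h : closedNbhd G v1 ⊆ closedNbhd G v2) (r : ℕ)
    (𝒜 ℬ : Finset (Finset V))
    (h𝒜 : ∀ A ∈ 𝒜, IndepFinset G A ∧ A.card = r)
    (hℬ : ∀ B ∈ ℬ, IndepFinset G B ∧ B.card = r)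
    (hcross : ∀ A ∈ 𝒜, ∀ B ∈ ℬ, (A ∩ B).Nonempty) :
    (∀ S ∈ (𝒜.image (compress v1 v2 𝒜)).filter (fun A => v2 ∉ A),
      ↑S ⊆ {u : V | u ≠ v2} ∧ IndepFinset G S ∧ S.card = r) ∧
    (∀ T ∈ (ℬ.image (compress v1 v2 ℬ)).filter (fun B => v2 ∉ B),
      ↑T ⊆ {u : V | u ≠ v2} ∧ IndepFinset G T ∧ T.card = r) ∧
    ∀ S ∈ (𝒜.image (compress v1 v2 𝒜)).filter (fun A => v2 ∉ A),
      ∀ T ∈ (ℬ.image (compress v1 v2 ℬ)).filter (fun B => v2 ∉ B),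
        (S ∩ T).Nonempty := by
  refine ⟨family_prop h h𝒜, family_prop h hℬ, ?_⟩
  intro S hS T hT
  rw [Finset.mem_filter, Finset.mem_image] at hS hT
  obtain ⟨⟨A, hAmem, hSA⟩, hv2S⟩ := hS
  obtain ⟨⟨B, hBmem, hTB⟩, hv2T⟩ := hT
  unfold compress at hSA hTB
  split_ifs at hSA with hcA <;> split_ifs at hTB with hcB <;> subst hSA <;> subst hTB
  · exact ⟨v1, Finset.mem_inter.mpr ⟨Finset.mem_insert_self _ _, Finset.mem_insert_self _ _⟩⟩
  · obtain ⟨x, hx⟩ := hcross A hAmem B hBmem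
    rw [Finset.mem_inter] at hx
    have hxv2 : x ≠ v2 := fun e => hv2T (e ▸ hx.2)
    exact ⟨x, Finset.mem_inter.mpr
      ⟨Finset.mem_insert_of_mem (Finset.mem_erase.mpr ⟨hxv2, hx.1⟩), hx.2⟩⟩
  · obtain ⟨x, hx⟩ := hcross A hAmem B hBmem
    rw [Finset.mem_inter] at hx
    have hxv2 : x ≠ v2 := fun e => hv2S (e ▸ hx.1)
    exact ⟨x, Finset.mem_inter.mpr
      ⟨hx.1, Finset.mem_insert_of_mem (Finset.mem_erase.mpr ⟨hxv2, hx.2⟩)⟩⟩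
  · exact hcross A hAmem B hBmem
end

section
/- If G is the edgeless graph on n vertices and r ≤ n/2, then for any cross-intersecting pair (A, B) of families of r-subsets of the vertex set, |A| + |B| ≤ C(n, r). -/
open Finset FinsetFamily

/-- Iterated local LYM: the density of the `k`-th iterated shadow is at least that of `𝒜`. -/
lemma aux_iterated_lym (n : ℕ) : ∀ (k m : ℕ) (𝒜 : Finset (Finset (Fin n))),
    (𝒜 : Set (Finset (Fin n))).Sized m → k ≤ m →
    (𝒜.card : ℚ) / (n.choose m) ≤ ((∂^[k] 𝒜).card : ℚ) / (n.choose (m - k)) := by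
  intro k
  induction k with
  | zero => intro m 𝒜 h _; simp
  | succ k ih =>
    intro m 𝒜 h hk
    have hm : m ≠ 0 := by omega
    have h1 : (𝒜.card : ℚ) / ((Fintype.card (Fin n)).choose m)
        ≤ ((∂ 𝒜).card : ℚ) / ((Fintype.card (Fin n)).choose (m - 1)) :=
      Finset.card_div_choose_le_card_shadow_div_choose hm h
    rw [Fintype.card_fin] at h1
    have h2 := ih (m - 1) (∂ 𝒜) h.shadow (by omega)
    have : m - 1 - k = m - (k + 1) := by omega
    rw [this] at h2
    rw [Function.iterate_succ_apply]
    exact h1.trans h2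

theorem stmt16 (n r : ℕ) (hr : 2 * r ≤ n)
    (𝒜 ℬ : Finset (Finset (Fin n)))
    (h𝒜 : ∀ A ∈ 𝒜, A.card = r) (hℬ : ∀ B ∈ ℬ, B.card = r)
    (hcross : ∀ A ∈ 𝒜, ∀ B ∈ ℬ, (A ∩ B).Nonempty) :
    𝒜.card + ℬ.card ≤ n.choose r := by
  classical
  have hrn : r ≤ n := by omega
  have h𝒜s : (𝒜 : Set (Finset (Fin n))).Sized r := fun A hA => h𝒜 A hA
  have hℬs : (ℬ : Set (Finset (Fin n))).Sized r := fun B hB => hℬ B hB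
  -- dispose of r = 0
  rcases Nat.eq_zero_or_pos r with rfl | hr0
  · -- every set is ∅, so at most one family is nonempty
    rcases 𝒜.eq_empty_or_nonempty with rfl | ⟨A, hA⟩
    · simpa using le_trans (by
        convert hℬs.card_le
        rfl
        rw [Fintype.card_fin]) (le_refl (n.choose 0))
    rcases ℬ.eq_empty_or_nonempty with rfl | ⟨B, hB⟩
    · simpa using le_trans (by
        convert h𝒜s.card_le
        rfl
        rw [Fintype.card_fin]) (le_refl (n.choose 0))
    · exfalso
      obtain ⟨x, hx⟩ := hcross A hA B hB
      have : A = ∅ := Finset.card_eq_zero.mp (h𝒜 A hA)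
      simp [this] at hx
  rcases 𝒜.eq_empty_or_nonempty with rfl | h𝒜ne
  · simpa using le_trans (by
      convert hℬs.card_le
      rfl
      rw [Fintype.card_fin]) (le_refl (n.choose r))
  -- main case
  set 𝒞 := ∂^[n - 2 * r] 𝒜ᶜˢ with h𝒞
  have hdisj : Disjoint ℬ 𝒞 := by
    rw [Finset.disjoint_right]
    intro B hB𝒞 hBℬ
    rw [h𝒞, mem_shadow_iterate_iff_exists_sdiff] at hB𝒞
    obtain ⟨C, hC, hBC, _⟩ := hB𝒞
    rw [Finset.mem_compls] at hC
    obtain ⟨x, hx⟩ := hcross _ hC B hBℬ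
    rw [Finset.mem_inter] at hx
    exact (Finset.mem_compl.mp hx.1) (hBC hx.2)
  have h𝒜bar : ((𝒜ᶜˢ : Finset (Finset (Fin n))) : Set (Finset (Fin n))).Sized (n - r) := by
    simpa using h𝒜s.compls
  have hle : 𝒜.card ≤ 𝒞.card := by
    have key := aux_iterated_lym n (n - 2 * r) (n - r) 𝒜ᶜˢ h𝒜bar (by omega)
    have hmk : n - r - (n - 2 * r) = r := by omega
    rw [hmk, Finset.card_compls, Nat.choose_symm hrn] at key
    have hpos : (0 : ℚ) < (n.choose r : ℚ) := by
      exact_mod_cast Nat.choose_pos hrn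
    have := (div_le_div_iff_of_pos_right hpos).mp key
    exact_mod_cast this
  have hsized : ((ℬ ∪ 𝒞 : Finset (Finset (Fin n))) : Set (Finset (Fin n))).Sized r := by
    rw [Finset.coe_union, Set.sized_union]
    refine ⟨hℬs, ?_⟩
    have := h𝒜bar.shadow_iterate (k := n - 2 * r)
    convert this using 2
    omega
  calc 𝒜.card + ℬ.card ≤ 𝒞.card + ℬ.card := by omega
    _ = (ℬ ∪ 𝒞).card := by
        rw [Finset.card_union_of_disjoint hdisj]; omega
    _ ≤ n.choose r := by
        convert hsized.card_le
        rw [Fintype.card_fin]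
end

section
/- Let r ≤ n/2 and k ≥ 2, and let A_1, …, A_k be cross-intersecting families of r-subsets of [n] with A_1 nonempty. If k ≤ n/r then Σ|A_i| ≤ C(n, r), and if k ≥ n/r then Σ|A_i| ≤ k · C(n-1, r-1). -/
open Finset


lemma interval_lemma {n m : ℕ} [NeZero n] (hm : m + 1 ≤ n)
    (A C : Finset (ZMod n)) (hA : A.Nonempty) (hC : C.Nonempty)
    (h : ∀ a ∈ A, ∀ c ∈ C, 1 ≤ (c - a).val ∧ (c - a).val ≤ m) :
    A.card + C.card ≤ m + 1 := by
  obtain ⟨p, hp, hmax⟩ := Finset.exists_max_image (A ×ˢ C) (fun p => (p.2 - p.1).val)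
    (hA.product hC)
  obtain ⟨ha0, hc0⟩ := Finset.mem_product.1 hp
  set a0 := p.1 with ha0def
  set c0 := p.2 with hc0def
  set δ := (c0 - a0).val with hδ
  have hδm : δ ≤ m := (h a0 ha0 c0 hc0).2
  have hδn : δ < n := ZMod.val_lt _
  have hCmem : ∀ c ∈ C, 1 ≤ (c - a0).val ∧ (c - a0).val ≤ δ := fun c hc =>
    ⟨(h a0 ha0 c hc).1, hmax (a0, c) (Finset.mem_product.2 ⟨ha0, hc⟩)⟩
  have hAmem : ∀ a ∈ A, (a - a0).val < δ ∨ a = a0 := by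
    intro a ha
    rcases eq_or_ne a a0 with rfl | hne
    · exact Or.inr rfl
    left
    have h1 : 1 ≤ (c0 - a).val := (h a ha c0 hc0).1
    have h2 : (c0 - a).val ≤ δ := hmax (a, c0) (Finset.mem_product.2 ⟨ha, hc0⟩)
    set e := (c0 - a).val with he
    have key : a - a0 = (↑(δ - e) : ZMod n) := by
      have e1 : (↑δ : ZMod n) = c0 - a0 := ZMod.natCast_rightInverse _
      have e2 : (↑e : ZMod n) = c0 - a := ZMod.natCast_rightInverse _
      rw [Nat.cast_sub h2, e1, e2]; ring
    have : (a - a0).val = δ - e := by rw [key, ZMod.val_cast_of_lt (by omega)]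
    omega
  -- map into range (δ + 1)
  have hdisj : Disjoint A C := by
    rw [Finset.disjoint_left]
    intro x hxA hxC
    have := (h x hxA x hxC).1
    simp at this
  have hsub : (A ∪ C).card ≤ δ + 1 := by
    have : ((A ∪ C).image (fun x => (x - a0).val)).card = (A ∪ C).card := by
      apply Finset.card_image_of_injOn
      intro x _ y _ hxy
      have : ((x - a0 : ZMod n)) = (y - a0) := ZMod.val_injective _ hxy
      linear_combination (norm := ring_nf) this
    rw [← this]
    have hsub2 : (A ∪ C).image (fun x => (x - a0).val) ⊆ Finset.range (δ + 1) := by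
      intro v hv
      simp only [Finset.mem_image, Finset.mem_union] at hv
      obtain ⟨x, hx | hx, rfl⟩ := hv
      · rcases hAmem x hx with h' | rfl
        · exact Finset.mem_range.2 (by omega)
        · simp
      · exact Finset.mem_range.2 (by have := (hCmem x hx).2; omega)
    calc ((A ∪ C).image (fun x => (x - a0).val)).card ≤ (Finset.range (δ+1)).card :=
          Finset.card_le_card hsub2
      _ = δ + 1 := by simp
  calc A.card + C.card = (A ∪ C).card := (Finset.card_union_of_disjoint hdisj).symm
    _ ≤ δ + 1 := hsub
    _ ≤ m + 1 := by omega




lemma pair_lemma {n r : ℕ} [NeZero n] (hr : 1 ≤ r) (hrn : 2 * r ≤ n)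
    (A B : Finset (ZMod n)) (hA : A.Nonempty) (hB : B.Nonempty)
    (h : ∀ a ∈ A, ∀ b ∈ B, (b - a).val < r ∨ (a - b).val < r) :
    A.card + B.card ≤ 2 * r := by
  set C := B.image (· + (r : ZMod n)) with hC
  have hcardC : C.card = B.card := Finset.card_image_of_injective _ (add_left_injective _)
  have hrval : ((r : ZMod n)).val = r := ZMod.val_cast_of_lt (by omega)
  have key : ∀ a ∈ A, ∀ c ∈ C, 1 ≤ (c - a).val ∧ (c - a).val ≤ 2 * r - 1 := by
    intro a ha c hc
    simp only [hC, Finset.mem_image] at hc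
    obtain ⟨b, hb, rfl⟩ := hc
    have hsub : b + (r : ZMod n) - a = (b - a) + (r : ZMod n) := by ring
    rcases h a ha b hb with hlt | hlt
    · -- (b-a).val < r : val((b-a)+r) = (b-a).val + r
      have : (b + (r : ZMod n) - a).val = (b - a).val + r := by
        rw [hsub, ZMod.val_add, hrval, Nat.mod_eq_of_lt (by omega)]
      omega
    · -- (a-b).val < r
      rcases eq_or_ne a b with rfl | hne
      · have : (a + (r : ZMod n) - a).val = r := by
          rw [show a + (r : ZMod n) - a = (r : ZMod n) by ring, hrval]
        omega
      · have hab0 : a - b ≠ 0 := sub_ne_zero.2 hne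
        have : NeZero (a - b) := ⟨hab0⟩
        have hvne : (b - a).val = n - (a - b).val := by
          rw [show b - a = -(a - b) by ring, ZMod.val_neg_of_ne_zero (a - b)]
        have h1 : 1 ≤ (a - b).val := by
          have : (a - b).val ≠ 0 := by
            simpa [ZMod.val_eq_zero] using hab0
          omega
        have : (b + (r : ZMod n) - a).val = r - (a - b).val := by
          rw [hsub, ZMod.val_add, hrval, hvne]
          have hn : (n - (a - b).val + r) = n + (r - (a - b).val) := by omega
          rw [hn, Nat.add_mod_left, Nat.mod_eq_of_lt (by omega)]
        omega
  have hCne : C.Nonempty := hB.image _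
  have := interval_lemma (n := n) (m := 2 * r - 1) (by omega) A C hA hCne key
  omega




lemma circle_lemma {n r k : ℕ} [NeZero n] (hr : 1 ≤ r) (hrn : 2 * r ≤ n) (hk : 2 ≤ k)
    (S : Fin k → Finset (ZMod n))
    (h : ∀ i j, i ≠ j → ∀ a ∈ S i, ∀ b ∈ S j, (b - a).val < r ∨ (a - b).val < r) :
    ∑ i, (S i).card ≤ max n (k * r) := by
  set a : Fin k → ℕ := fun i => (S i).card with ha
  set T := ∑ i, a i with hT
  by_cases htwo : ∃ i j, i ≠ j ∧ (S i).Nonempty ∧ (S j).Nonempty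
  · obtain ⟨i0, j0, hij0, hi0, hj0⟩ := htwo
    have hpair : ∀ i j, i ≠ j → a i + a j ≤ 2 * r := by
      have hone : ∀ i, (S i).Nonempty → a i ≤ 2 * r - 1 := by
        intro i hi
        obtain ⟨m, hmne, hm⟩ : ∃ m, m ≠ i ∧ (S m).Nonempty := by
          rcases eq_or_ne i0 i with rfl | hne
          · exact ⟨j0, Ne.symm hij0, hj0⟩
          · exact ⟨i0, hne, hi0⟩
        have := pair_lemma hr hrn (S i) (S m) hi hm (h i m (Ne.symm hmne))
        have hmpos : 0 < (S m).card := Finset.card_pos.2 hm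
        simp only [ha]
        omega
      intro i j hij
      rcases (S i).eq_empty_or_nonempty with he | hi
      · rcases (S j).eq_empty_or_nonempty with he' | hj
        · simp [ha, he, he']
        · have := hone j hj; simp only [ha, he, Finset.card_empty, zero_add]
          simp only [ha] at this
          omega
      rcases (S j).eq_empty_or_nonempty with he' | hj
      · have := hone i hi; simp only [ha, he', Finset.card_empty, add_zero]
        simp only [ha] at this
        omega
      · exact pair_lemma hr hrn (S i) (S j) hi hj (h i j hij)
    have key : ∀ i : Fin k, a i + ∑ j ∈ Finset.univ.erase i, a j = T :=
      fun i => Finset.add_sum_erase _ _ (Finset.mem_univ i)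
    have e1 : ∑ i : Fin k, (a i + ∑ j ∈ Finset.univ.erase i, a j) = k * T := by
      simp_rw [key]
      simp [Finset.card_univ]
    have e2 : ∑ i : Fin k, ∑ j ∈ Finset.univ.erase i, (a i + a j)
        = ∑ i : Fin k, ((k - 1) * a i + ∑ j ∈ Finset.univ.erase i, a j) := by
      apply Finset.sum_congr rfl
      intro i _
      rw [Finset.sum_add_distrib, Finset.sum_const, Finset.card_erase_of_mem (Finset.mem_univ i),
        Finset.card_univ, Fintype.card_fin, smul_eq_mul]
    have e3 : ∑ i : Fin k, ∑ j ∈ Finset.univ.erase i, (a i + a j) ≤ k * ((k-1) * (2*r)) := by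
      calc ∑ i : Fin k, ∑ j ∈ Finset.univ.erase i, (a i + a j)
          ≤ ∑ i : Fin k, ∑ _j ∈ Finset.univ.erase i, 2 * r := by
            refine Finset.sum_le_sum fun i _ => Finset.sum_le_sum fun j hj => ?_
            exact hpair i j (Ne.symm (Finset.ne_of_mem_erase hj))
        _ = k * ((k-1) * (2*r)) := by
            simp [Finset.card_erase_of_mem, Finset.card_univ, mul_assoc]
    -- combine: e2 gives LHS = Σ (k-1) a i + Σ Σ_erase = (k-1) T + (kT - T)
    have e4 : ∑ i : Fin k, ((k - 1) * a i + ∑ j ∈ Finset.univ.erase i, a j)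
        = (k - 1) * T + (k * T - T) := by
      rw [Finset.sum_add_distrib, ← Finset.mul_sum, ← hT]
      congr 1
      have : ∑ i : Fin k, (a i + ∑ j ∈ Finset.univ.erase i, a j)
          = T + ∑ i : Fin k, ∑ j ∈ Finset.univ.erase i, a j := by
        rw [Finset.sum_add_distrib, ← hT]
      omega
    have hkT : T ≤ k * T := Nat.le_mul_of_pos_left T (by omega)
    have hsub : (k - 1) * T = k * T - T := Nat.sub_one_mul k T
    have hdouble : (k - 1) * (2 * T) = (k - 1) * T + (k - 1) * T := by ring
    have final : (k - 1) * (2 * T) ≤ (k - 1) * (k * (2 * r)) := by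
      have h5 : (k - 1) * T + (k * T - T) ≤ k * ((k-1)*(2*r)) := by
        rw [← e4, ← e2]; exact e3
      have h6 : k * ((k-1)*(2*r)) = (k - 1) * (k * (2 * r)) := by ring
      omega
    have h7 : 2 * T ≤ k * (2 * r) := Nat.le_of_mul_le_mul_left final (by omega)
    have h8 : k * (2 * r) = 2 * (k * r) := by ring
    exact le_max_of_le_right (by omega)
  · push_neg at htwo
    by_cases hall : ∀ i, S i = ∅
    · rw [hT]; simp [ha, hall]
    push_neg at hall
    obtain ⟨i0, hi0⟩ := hall
    have hi0ne : (S i0).Nonempty := hi0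
    have hothers : ∀ j, j ≠ i0 → S j = ∅ := by
      intro j hj
      rcases (S j).eq_empty_or_nonempty with he | hne
      · exact he
      · exact absurd (htwo j i0 hj hne) hi0ne.ne_empty
    have hsum : ∑ i, a i = a i0 := by
      rw [Finset.sum_eq_single i0]
      · intro b _ hb; simp [ha, hothers b hb]
      · simp
    rw [hT, hsum]
    have : (S i0).card ≤ Fintype.card (ZMod n) := Finset.card_le_univ _
    rw [ZMod.card] at this
    exact le_max_of_le_left this


section
variable {n r : ℕ} [NeZero n]

def arcF (r : ℕ) (σ : ZMod n ≃ Fin n) (t : ZMod n) : Finset (Fin n) :=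
  (Finset.range r).image (fun j : ℕ => σ (t + (j : ZMod n)))

lemma arcF_card (hrn : r ≤ n) (σ : ZMod n ≃ Fin n) (t : ZMod n) : (arcF r σ t).card = r := by
  rw [arcF, Finset.card_image_of_injOn, Finset.card_range]
  intro j1 h1 j2 h2 heq
  simp only [Finset.coe_range, Set.mem_Iio] at h1 h2
  have : t + (j1 : ZMod n) = t + (j2 : ZMod n) := σ.injective heq
  have : (j1 : ZMod n) = (j2 : ZMod n) := add_left_cancel this
  have := congrArg ZMod.val this
  rwa [ZMod.val_cast_of_lt (by omega), ZMod.val_cast_of_lt (by omega)] at this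

lemma exists_perm_image {A B : Finset (Fin n)} (hAB : A.card = B.card) :
    ∃ π : Equiv.Perm (Fin n), A.image π = B := by
  classical
  have hc : (Aᶜ : Finset (Fin n)).card = (Bᶜ : Finset (Fin n)).card := by
    rw [Finset.card_compl, Finset.card_compl, hAB]
  let e : {x // x ∈ A} ≃ {x // x ∈ B} := Finset.equivOfCardEq hAB
  let f : {x // ¬ x ∈ A} ≃ {x // ¬ x ∈ B} :=
    ((Equiv.subtypeEquivRight (fun x => (Finset.mem_compl).symm)).trans
      (Finset.equivOfCardEq hc)).trans (Equiv.subtypeEquivRight (fun x => Finset.mem_compl))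
  refine ⟨Equiv.subtypeCongr e f, ?_⟩
  have hmem : ∀ x ∈ A, Equiv.subtypeCongr e f x ∈ B := by
    intro x hx
    simp only [Equiv.subtypeCongr, Equiv.trans_apply, Equiv.sumCompl_symm_apply_of_pos hx,
      Equiv.sumCongr_apply, Sum.map_inl, Equiv.sumCompl_apply_inl]
    exact (e ⟨x, hx⟩).2
  apply Finset.eq_of_subset_of_card_le
  · intro y hy
    simp only [Finset.mem_image] at hy
    obtain ⟨x, hx, rfl⟩ := hy
    exact hmem x hx
  · rw [Finset.card_image_of_injective _ (Equiv.injective _), hAB]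

lemma count_const (t : ZMod n) {A B : Finset (Fin n)} (hA : A.card = r) (hB : B.card = r) :
    (Finset.univ.filter fun σ : ZMod n ≃ Fin n => arcF r σ t = A).card
      = (Finset.univ.filter fun σ : ZMod n ≃ Fin n => arcF r σ t = B).card := by
  classical
  obtain ⟨π, hπ⟩ := exists_perm_image (hA.trans hB.symm)
  apply Finset.card_bij (fun σ _ => σ.trans π)
  · intro σ hσ
    simp only [Finset.mem_filter, Finset.mem_univ, true_and] at hσ ⊢
    rw [show arcF r (σ.trans π) t = (arcF r σ t).image π by
      simp [arcF, Finset.image_image]; rfl, hσ, hπ]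
  · intro σ1 _ σ2 _ heq
    apply Equiv.ext; intro x
    have : π (σ1 x) = π (σ2 x) := by
      rw [← Equiv.trans_apply, ← Equiv.trans_apply, heq]
    exact π.injective this
  · intro τ hτ
    simp only [Finset.mem_filter, Finset.mem_univ, true_and] at hτ
    refine ⟨τ.trans π.symm, ?_, by ext x; simp⟩
    simp only [Finset.mem_filter, Finset.mem_univ, true_and]
    have himg : arcF r (τ.trans π.symm) t = (arcF r τ t).image π.symm := by
      simp [arcF, Finset.image_image]; rfl
    rw [himg, hτ, ← hπ, Finset.image_image]
    simp








lemma count_mul (hrn : r ≤ n) (t : ZMod n) {A : Finset (Fin n)} (hA : A.card = r) :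
    (Finset.univ.filter fun σ : ZMod n ≃ Fin n => arcF r σ t = A).card * n.choose r
      = n.factorial := by
  classical
  have hcards : Fintype.card (ZMod n ≃ Fin n) = n.factorial := by
    rw [Fintype.card_equiv (Fintype.equivOfCardEq (by rw [ZMod.card, Fintype.card_fin]))]
    rw [ZMod.card]
  have hfib := Finset.card_eq_sum_card_fiberwise
    (s := (Finset.univ : Finset (ZMod n ≃ Fin n)))
    (t := Finset.powersetCard r (Finset.univ : Finset (Fin n)))
    (f := fun σ => arcF r σ t)
    (fun σ _ => Finset.mem_powersetCard.2 ⟨Finset.subset_univ _, arcF_card hrn σ t⟩)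
  have hconst : ∀ B ∈ Finset.powersetCard r (Finset.univ : Finset (Fin n)),
      (Finset.univ.filter fun σ : ZMod n ≃ Fin n => arcF r σ t = B).card
        = (Finset.univ.filter fun σ : ZMod n ≃ Fin n => arcF r σ t = A).card := by
    intro B hB
    exact count_const t (Finset.mem_powersetCard.1 hB).2 hA
  rw [Finset.card_univ, hcards] at hfib
  rw [hfib, Finset.sum_congr rfl hconst, Finset.sum_const, Finset.card_powersetCard,
    Finset.card_univ, Fintype.card_fin, smul_eq_mul, mul_comm]



lemma main_count {k : ℕ} (hr : 1 ≤ r) (hrn : 2 * r ≤ n) (hk : 2 ≤ k)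
    (𝒜 : Fin k → Finset (Finset (Fin n)))
    (hcard : ∀ i, ∀ A ∈ 𝒜 i, A.card = r)
    (hcross : ∀ i j, i ≠ j → ∀ A ∈ 𝒜 i, ∀ B ∈ 𝒜 j, (A ∩ B).Nonempty) :
    n * (∑ i, (𝒜 i).card) ≤ max n (k * r) * n.choose r := by
  classical
  set M := max n (k * r) with hM
  -- per-σ bound
  have step1 : ∀ σ : ZMod n ≃ Fin n,
      ∑ i, (Finset.univ.filter fun t : ZMod n => arcF r σ t ∈ 𝒜 i).card ≤ M := by
    intro σ
    apply circle_lemma hr hrn hk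
    intro i j hij a hain b hbin
    simp only [Finset.mem_filter, Finset.mem_univ, true_and] at hain hbin
    obtain ⟨x, hx⟩ := hcross i j hij _ hain _ hbin
    simp only [Finset.mem_inter, arcF, Finset.mem_image, Finset.mem_range] at hx
    obtain ⟨⟨j1, hj1, hx1⟩, ⟨j2, hj2, hx2⟩⟩ := hx
    have heq : a + (j1 : ZMod n) = b + (j2 : ZMod n) := σ.injective (hx1.trans hx2.symm)
    rcases le_or_gt j2 j1 with hle | hlt
    · left
      have hba : b - a = ((j1 - j2 : ℕ) : ZMod n) := by
        rw [Nat.cast_sub hle]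
        linear_combination -heq
      rw [hba, ZMod.val_cast_of_lt (by omega)]
      omega
    · right
      have hab : a - b = ((j2 - j1 : ℕ) : ZMod n) := by
        rw [Nat.cast_sub (le_of_lt hlt)]
        linear_combination heq
      rw [hab, ZMod.val_cast_of_lt (by omega)]
      omega
  -- total bound
  have step2 : ∑ σ : ZMod n ≃ Fin n, ∑ i, (Finset.univ.filter
      fun t : ZMod n => arcF r σ t ∈ 𝒜 i).card ≤ n.factorial * M := by
    calc _ ≤ ∑ _σ : ZMod n ≃ Fin n, M := Finset.sum_le_sum fun σ _ => step1 σ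
      _ = n.factorial * M := by
          rw [Finset.sum_const, Finset.card_univ, smul_eq_mul]
          congr 1
          rw [Fintype.card_equiv (Fintype.equivOfCardEq (by rw [ZMod.card, Fintype.card_fin]))]
          rw [ZMod.card]
  -- exact count of LHS
  have step3 : (∑ σ : ZMod n ≃ Fin n, ∑ i, (Finset.univ.filter
      fun t : ZMod n => arcF r σ t ∈ 𝒜 i).card) * n.choose r
      = n * (∑ i, (𝒜 i).card) * n.factorial := by
    rw [Finset.sum_comm]
    rw [Finset.sum_mul]
    have inner : ∀ i : Fin k, (∑ σ : ZMod n ≃ Fin n,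
        (Finset.univ.filter fun t : ZMod n => arcF r σ t ∈ 𝒜 i).card) * n.choose r
        = n * ((𝒜 i).card * n.factorial) := by
      intro i
      have swap : ∑ σ : ZMod n ≃ Fin n,
          (Finset.univ.filter fun t : ZMod n => arcF r σ t ∈ 𝒜 i).card
          = ∑ t : ZMod n, (Finset.univ.filter
              fun σ : ZMod n ≃ Fin n => arcF r σ t ∈ 𝒜 i).card := by
        simp_rw [Finset.card_filter]
        exact Finset.sum_comm
      have fib : ∀ t : ZMod n, (Finset.univ.filter
          fun σ : ZMod n ≃ Fin n => arcF r σ t ∈ 𝒜 i).card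
          = ∑ A ∈ 𝒜 i, (Finset.univ.filter
              fun σ : ZMod n ≃ Fin n => arcF r σ t = A).card := by
        intro t
        have := Finset.card_eq_sum_card_fiberwise
          (s := Finset.univ.filter fun σ : ZMod n ≃ Fin n => arcF r σ t ∈ 𝒜 i)
          (t := 𝒜 i) (f := fun σ => arcF r σ t)
          (fun σ hσ => (Finset.mem_filter.1 hσ).2)
        rw [this]
        apply Finset.sum_congr rfl
        intro A hA
        congr 1
        rw [Finset.filter_filter]
        apply Finset.filter_congr
        intro σ _
        constructor
        · rintro ⟨_, h2⟩; exact h2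
        · intro h2; exact ⟨h2 ▸ hA, h2⟩
      rw [swap]
      simp_rw [fib]
      rw [Finset.sum_mul]
      have : ∀ t : ZMod n, (∑ A ∈ 𝒜 i, (Finset.univ.filter
          fun σ : ZMod n ≃ Fin n => arcF r σ t = A).card) * n.choose r
          = (𝒜 i).card * n.factorial := by
        intro t
        rw [Finset.sum_mul]
        rw [Finset.sum_congr rfl (fun A hA => count_mul (by omega) t (hcard i A hA))]
        rw [Finset.sum_const, smul_eq_mul]
      rw [Finset.sum_congr rfl (fun t _ => this t), Finset.sum_const, smul_eq_mul]
      rw [Finset.card_univ, ZMod.card]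
    rw [Finset.sum_congr rfl (fun i _ => inner i), ← Finset.mul_sum, ← Finset.sum_mul]
    ring
  -- combine
  have step4 : n * (∑ i, (𝒜 i).card) * n.factorial ≤ n.factorial * M * n.choose r := by
    rw [← step3]
    exact Nat.mul_le_mul_right _ step2
  have hfac : 0 < n.factorial := Nat.factorial_pos n
  have : n * (∑ i, (𝒜 i).card) * n.factorial ≤ (M * n.choose r) * n.factorial := by
    calc n * (∑ i, (𝒜 i).card) * n.factorial ≤ n.factorial * M * n.choose r := step4
      _ = (M * n.choose r) * n.factorial := by ring
  exact Nat.le_of_mul_le_mul_right this hfac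


theorem stmt17 (n r k : ℕ) (hr : 2 * r ≤ n) (hk : 2 ≤ k)
    (𝒜 : Fin k → Finset (Finset (Fin n)))
    (hcard : ∀ i, ∀ A ∈ 𝒜 i, A.card = r)
    (hcross : ∀ i j, i ≠ j → ∀ A ∈ 𝒜 i, ∀ B ∈ 𝒜 j, (A ∩ B).Nonempty)
    (hne : (𝒜 ⟨0, by omega⟩).Nonempty) :
    (k * r ≤ n → ∑ i, (𝒜 i).card ≤ n.choose r) ∧
      (n ≤ k * r → ∑ i, (𝒜 i).card ≤ k * (n - 1).choose (r - 1)) := by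
  classical
  rcases Nat.eq_zero_or_pos r with rfl | hrpos
  · -- r = 0
    have hone : ∑ i, (𝒜 i).card ≤ 1 := by
      by_cases hall : ∀ i, 𝒜 i = ∅
      · simp [hall]
      push_neg at hall
      obtain ⟨i0, hi0⟩ := hall
      have hi0ne : (𝒜 i0).Nonempty := hi0
      have hothers : ∀ j, j ≠ i0 → 𝒜 j = ∅ := by
        intro j hj
        rcases (𝒜 j).eq_empty_or_nonempty with he | ⟨B, hB⟩
        · exact he
        obtain ⟨A, hA⟩ := hi0ne
        have := hcross i0 j (Ne.symm hj) A hA B hB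
        have hAe : A = ∅ := Finset.card_eq_zero.1 (hcard i0 A hA)
        simp [hAe] at this
      have : ∑ i, (𝒜 i).card = (𝒜 i0).card := by
        rw [Finset.sum_eq_single i0]
        · intro b _ hb; simp [hothers b hb]
        · simp
      rw [this]
      have hsub : 𝒜 i0 ⊆ {∅} := by
        intro A hA
        simp [Finset.card_eq_zero.1 (hcard i0 A hA)]
      calc (𝒜 i0).card ≤ ({∅} : Finset (Finset (Fin n))).card := Finset.card_le_card hsub
        _ = 1 := rfl
    constructor
    · intro _
      simpa using hone
    · intro _
      have h0 : (0:ℕ) - 1 = 0 := rfl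
      rw [h0]
      have : (1:ℕ) ≤ k * (n - 1).choose 0 := by simp; omega
      omega
  · -- r ≥ 1, so n ≥ 2
    haveI : NeZero n := ⟨by omega⟩
    have key := main_count (n := n) (r := r) (k := k) hrpos hr hk 𝒜 hcard hcross
    have hnpos : 0 < n := by omega
    constructor
    · intro hkr
      have hmax : max n (k * r) = n := max_eq_left hkr
      rw [hmax] at key
      exact Nat.le_of_mul_le_mul_left key hnpos
    · intro hnk
      have hmax : max n (k * r) = k * r := max_eq_right hnk
      rw [hmax] at key
      have hid : n * (n - 1).choose (r - 1) = n.choose r * r := by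
        have := Nat.add_one_mul_choose_eq (n - 1) (r - 1)
        have h1 : n - 1 + 1 = n := by omega
        have h2 : r - 1 + 1 = r := by omega
        rw [h1, h2] at this
        exact this
      have : n * (∑ i, (𝒜 i).card) ≤ n * (k * (n - 1).choose (r - 1)) := by
        calc n * (∑ i, (𝒜 i).card) ≤ k * r * n.choose r := key
          _ = k * (n.choose r * r) := by ring
          _ = k * (n * (n - 1).choose (r - 1)) := by rw [hid]
          _ = n * (k * (n - 1).choose (r - 1)) := by ring
      exact Nat.le_of_mul_le_mul_left this hnpos
end
end
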